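/- arXiv:1804.03894 — 2 statements merged into one kernel-verified Lean document; each statement's English description precedes it below -/
import Mathlib

section
/- Shapley values for the area of the anchored bounding box: let P be a finite set of n points in the open positive quadrant of ℝ², with all x-coordinates pairwise distinct and all y-coordinates pairwise distinct, and let X = max_{q∈P} x(q), Y = max_{q∈P} y(q). Let v_abb be the coalitional game on P with v_abb(Q) = (max_{q∈Q} x(q)) · (max_{q∈Q} y(q)) for nonempty Q (the area of the bounding box of Q ∪ {origin}), and v_abb(∅)=0. For z in the open positive quadrant define ne(z) = |{q ∈ P : x(q) ≥ x(z), y(q) ≥ y(z)}|, nw(z) = |{q ∈ P : x(q) ≤ x(z), y(q) ≥ y(z)}|, se(z) = |{q ∈ P : x(q) ≥ x(z), y(q) ≤ y(z)}|, and set ψ_NE(z) = 1/(ne(z)+nw(z)) + 1/(ne(z)+se(z)) − 1/(ne(z)+nw(z)+se(z)), ψ_NW(z) = 1/(ne(z)+nw(z)) − 1/(ne(z)+nw(z)+se(z)), ψ_SE(z) = 1/(ne(z)+se(z)) − 1/(ne(z)+nw(z)+se(z)). Then for every p ∈ P, φ(p, v_abb) = ∫_{(0,x(p))×(0,y(p))}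 ψ_NE(z) dz + ∫_{(x(p),X)×(0,y(p))} ψ_NW(z) dz + ∫_{(0,x(p))×(y(p),Y)} ψ_SE(z) dz, where all integrals are with respect to Lebesgue measure (on these regions the relevant denominators are nonzero almost everywhere). -/
open MeasureTheory

open Finset

/-- The Shapley value of player `p` in the coalitional game with player set `P`
and characteristic function `v`. -/
noncomputable def shapley {α : Type*} [DecidableEq α] (P : Finset α) (v : Finset α → ℝ)
    (p : α) : ℝ :=
  if hp : p ∈ P then
    (∑ π : {x // x ∈ P} ≃ Fin P.card,
      (v ((P.attach.filter fun q => π q ≤ π ⟨p, hp⟩).image Subtype.val) -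
        v (((P.attach.filter fun q => π q ≤ π ⟨p, hp⟩).image Subtype.val).erase p))) /
      (P.card).factorial
  else 0
/-- Number of points of `P` to the north-east of `z`. -/
noncomputable def neCount (P : Finset (ℝ × ℝ)) (z : ℝ × ℝ) : ℕ :=
  (P.filter fun q => z.1 ≤ q.1 ∧ z.2 ≤ q.2).card

/-- Number of points of `P` to the north-west of `z`. -/
noncomputable def nwCount (P : Finset (ℝ × ℝ)) (z : ℝ × ℝ) : ℕ :=
  (P.filter fun q => q.1 ≤ z.1 ∧ z.2 ≤ q.2).card

/-- Number of points of `P` to the south-east of `z`. -/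
noncomputable def seCount (P : Finset (ℝ × ℝ)) (z : ℝ × ℝ) : ℕ :=
  (P.filter fun q => z.1 ≤ q.1 ∧ q.2 ≤ z.2).card

noncomputable def psiNE (P : Finset (ℝ × ℝ)) (z : ℝ × ℝ) : ℝ :=
  1 / ((neCount P z : ℝ) + (nwCount P z : ℝ)) +
    1 / ((neCount P z : ℝ) + (seCount P z : ℝ)) -
    1 / ((neCount P z : ℝ) + (nwCount P z : ℝ) + (seCount P z : ℝ))

noncomputable def psiNW (P : Finset (ℝ × ℝ)) (z : ℝ × ℝ) : ℝ :=
  1 / ((neCount P z : ℝ) + (nwCount P z : ℝ)) -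
    1 / ((neCount P z : ℝ) + (nwCount P z : ℝ) + (seCount P z : ℝ))

noncomputable def psiSE (P : Finset (ℝ × ℝ)) (z : ℝ × ℝ) : ℝ :=
  1 / ((neCount P z : ℝ) + (seCount P z : ℝ)) -
    1 / ((neCount P z : ℝ) + (nwCount P z : ℝ) + (seCount P z : ℝ))


/-- Number of bijections for which `p` is the minimum of `S` : `n!/|S|`. -/
lemma count_min {α : Type*} [Fintype α] [DecidableEq α] {n : ℕ} (hn : Fintype.card α = n)
    (p : α) (S : Finset α) (hpS : p ∈ S) :
    (Finset.univ.filter fun π : α ≃ Fin n => ∀ q ∈ S, π p ≤ π q).card * S.card = n.factorial := by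
  classical
  have hSne : S.Nonempty := ⟨p, hpS⟩
  set T : α → Finset (α ≃ Fin n) :=
    fun a => Finset.univ.filter (fun π : α ≃ Fin n => ∀ q ∈ S, π a ≤ π q) with hT
  -- the "argmin" map
  set f : (α ≃ Fin n) → α := fun π => π.symm ((S.image π).min' (hSne.image π)) with hf
  have hfS : ∀ π, f π ∈ S := by
    intro π
    obtain ⟨a, haS, ha⟩ := Finset.mem_image.1 ((S.image π).min'_mem (hSne.image π))
    have : f π = a := by rw [hf]; simp only; rw [← ha, Equiv.symm_apply_apply]
    rw [this]; exact haS
  have hfib : ∀ a ∈ S, Finset.univ.filter (fun π => f π = a) = T a := by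
    intro a haS
    ext π
    simp only [Finset.mem_filter, Finset.mem_univ, true_and, hT]
    constructor
    · rintro rfl
      intro q hq
      have h1 : π (f π) = (S.image π).min' (hSne.image π) := by
        rw [hf]; simp only; rw [Equiv.apply_symm_apply]
      rw [h1]
      exact Finset.min'_le _ _ (Finset.mem_image_of_mem π hq)
    · intro h
      have h1 : (S.image π).min' (hSne.image π) = π a := by
        refine le_antisymm (Finset.min'_le _ _ (Finset.mem_image_of_mem π haS)) ?_
        refine Finset.le_min' _ _ _ ?_
        rintro b hb
        obtain ⟨q, hq, rfl⟩ := Finset.mem_image.1 hb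
        exact h q hq
      rw [hf]; simp only; rw [h1, Equiv.symm_apply_apply]
  have hcardT : ∀ a ∈ S, (T a).card = (T p).card := by
    intro a haS
    apply Finset.card_bij' (fun π _ => (Equiv.swap a p).trans π)
      (fun π _ => (Equiv.swap a p).trans π)
    · intro π hπ
      simp only [hT, Finset.mem_filter, Finset.mem_univ, true_and] at hπ ⊢
      intro q hq
      have : (Equiv.swap a p).trans π p = π a := by simp [Equiv.swap_apply_right]
      rw [this]
      have hqS : Equiv.swap a p q ∈ S := by
        rcases eq_or_ne q a with rfl | hqa
        · simpa [Equiv.swap_apply_left] using hpS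
        rcases eq_or_ne q p with rfl | hqp
        · simpa [Equiv.swap_apply_right] using haS
        · rwa [Equiv.swap_apply_of_ne_of_ne hqa hqp]
      exact hπ _ hqS
    · intro π hπ
      simp only [hT, Finset.mem_filter, Finset.mem_univ, true_and] at hπ ⊢
      intro q hq
      have : (Equiv.swap a p).trans π a = π p := by simp [Equiv.swap_apply_left]
      rw [this]
      have hqS : Equiv.swap a p q ∈ S := by
        rcases eq_or_ne q a with rfl | hqa
        · simpa [Equiv.swap_apply_left] using hpS
        rcases eq_or_ne q p with rfl | hqp
        · simpa [Equiv.swap_apply_right] using haS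
        · rwa [Equiv.swap_apply_of_ne_of_ne hqa hqp]
      exact hπ _ hqS
    · intro π _; ext q; simp
    · intro π _; ext q; simp
  have hcard : (Finset.univ : Finset (α ≃ Fin n)).card = ∑ a ∈ S, (T a).card := by
    rw [Finset.card_eq_sum_card_fiberwise (fun π _ => hfS π)]
    exact Finset.sum_congr rfl fun a ha => by rw [hfib a ha]
  have huniv : (Finset.univ : Finset (α ≃ Fin n)).card = n.factorial := by
    have e : α ≃ Fin n := Fintype.equivFinOfCardEq hn
    rw [Finset.card_univ, Fintype.card_equiv e, hn]
  rw [Finset.sum_congr rfl hcardT, Finset.sum_const, smul_eq_mul] at hcard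
  have := hcard.symm.trans huniv
  rw [mul_comm] at this
  exact this


def boxSet (Q : Finset (ℝ × ℝ)) : Set (ℝ × ℝ) :=
  {z | 0 < z.1 ∧ 0 < z.2 ∧ (∃ q ∈ Q, z.1 < q.1) ∧ (∃ q ∈ Q, z.2 < q.2)}

lemma boxSet_empty : boxSet ∅ = ∅ := by
  ext z; simp [boxSet]

lemma boxSet_mono {Q Q' : Finset (ℝ × ℝ)} (h : Q' ⊆ Q) : boxSet Q' ⊆ boxSet Q := by
  rintro z ⟨h1, h2, ⟨q, hq, hq1⟩, ⟨r, hr, hr1⟩⟩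
  exact ⟨h1, h2, ⟨q, h hq, hq1⟩, ⟨r, h hr, hr1⟩⟩

lemma boxSet_eq {Q : Finset (ℝ × ℝ)} (hQ : Q.Nonempty) :
    boxSet Q = (Set.Ioo 0 (Q.sup' hQ fun q => q.1)) ×ˢ (Set.Ioo 0 (Q.sup' hQ fun q => q.2)) := by
  ext z
  simp only [boxSet, Set.mem_setOf_eq, Set.mem_prod, Set.mem_Ioo, Finset.lt_sup'_iff]
  tauto

lemma volume_boxSet {Q : Finset (ℝ × ℝ)} (hQ : Q.Nonempty)
    (hpos : ∀ q ∈ Q, 0 < q.1 ∧ 0 < q.2) :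
    volume (boxSet Q) = ENNReal.ofReal (Q.sup' hQ fun q => q.1) *
      ENNReal.ofReal (Q.sup' hQ fun q => q.2) := by
  rw [boxSet_eq hQ, MeasureTheory.Measure.volume_eq_prod ℝ ℝ, MeasureTheory.Measure.prod_prod, Real.volume_Ioo,
    Real.volume_Ioo, sub_zero, sub_zero]

lemma measurableSet_boxSet (Q : Finset (ℝ × ℝ)) : MeasurableSet (boxSet Q) := by
  rcases Q.eq_empty_or_nonempty with rfl | hQ
  · rw [boxSet_empty]; exact MeasurableSet.empty
  · rw [boxSet_eq hQ]; exact (measurableSet_Ioo.prod measurableSet_Ioo)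

lemma volume_boxSet_ne_top (Q : Finset (ℝ × ℝ)) : volume (boxSet Q) ≠ ⊤ := by
  rcases Q.eq_empty_or_nonempty with rfl | hQ
  · simp [boxSet_empty]
  · rw [boxSet_eq hQ, MeasureTheory.Measure.volume_eq_prod ℝ ℝ, MeasureTheory.Measure.prod_prod, Real.volume_Ioo,
      Real.volume_Ioo]
    exact ENNReal.mul_ne_top ENNReal.ofReal_ne_top ENNReal.ofReal_ne_top

lemma integrable_indicator_boxSet (Q : Finset (ℝ × ℝ)) :
    Integrable ((boxSet Q).indicator fun _ => (1 : ℝ)) volume := by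
  rw [integrable_indicator_iff (measurableSet_boxSet Q)]
  exact integrableOn_const (volume_boxSet_ne_top Q) (by simp)

lemma v_eq_integral {P Q : Finset (ℝ × ℝ)} (hQP : Q ⊆ P)
    (hpos : ∀ q ∈ P, 0 < q.1 ∧ 0 < q.2) :
    (if h : Q.Nonempty then (Q.sup' h fun q => q.1) * (Q.sup' h fun q => q.2) else 0) =
      ∫ z, (boxSet Q).indicator (fun _ => (1 : ℝ)) z := by
  rcases Q.eq_empty_or_nonempty with rfl | hQ
  · simp [boxSet_empty]
  · rw [dif_pos hQ]
    have hposQ : ∀ q ∈ Q, 0 < q.1 ∧ 0 < q.2 := fun q hq => hpos q (hQP hq)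
    have hX : 0 < Q.sup' hQ fun q => q.1 := by
      obtain ⟨q, hq⟩ := hQ
      exact lt_of_lt_of_le (hposQ q hq).1 (Finset.le_sup' _ hq)
    have hY : 0 < Q.sup' hQ fun q => q.2 := by
      obtain ⟨q, hq⟩ := hQ
      exact lt_of_lt_of_le (hposQ q hq).2 (Finset.le_sup' _ hq)
    have h1 : ((boxSet Q).indicator fun _ => (1:ℝ)) = (boxSet Q).indicator 1 := rfl
    rw [h1, MeasureTheory.integral_indicator_one (measurableSet_boxSet Q),
      measureReal_def, volume_boxSet hQ hposQ, ENNReal.toReal_mul, ENNReal.toReal_ofReal hX.le,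
      ENNReal.toReal_ofReal hY.le]


noncomputable def Qset (P : Finset (ℝ × ℝ)) (p : ℝ × ℝ) (hp : p ∈ P)
    (π : {x // x ∈ P} ≃ Fin P.card) : Finset (ℝ × ℝ) :=
  (P.attach.filter fun q => π q ≤ π ⟨p, hp⟩).image Subtype.val

section
variable {P : Finset (ℝ × ℝ)} {p : ℝ × ℝ} (hp : p ∈ P) (π : {x // x ∈ P} ≃ Fin P.card)

lemma mem_Qset {q : ℝ × ℝ} :
    q ∈ Qset P p hp π ↔ ∃ h : q ∈ P, π ⟨q, h⟩ ≤ π ⟨p, hp⟩ := by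
  simp only [Qset, Finset.mem_image, Finset.mem_filter, Finset.mem_attach, true_and]
  constructor
  · rintro ⟨⟨r, hr⟩, h1, rfl⟩; exact ⟨hr, h1⟩
  · rintro ⟨h, h1⟩; exact ⟨⟨q, h⟩, h1, rfl⟩

lemma self_mem_Qset : p ∈ Qset P p hp π := (mem_Qset hp π).2 ⟨hp, le_refl _⟩

lemma Qset_subset : Qset P p hp π ⊆ P := by
  intro q hq; exact ((mem_Qset hp π).1 hq).1

lemma mem_erase_Qset {q : ℝ × ℝ} :
    q ∈ (Qset P p hp π).erase p ↔ ∃ h : q ∈ P, π ⟨q, h⟩ < π ⟨p, hp⟩ := by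
  rw [Finset.mem_erase, mem_Qset]
  constructor
  · rintro ⟨hne, h, hle⟩
    refine ⟨h, lt_of_le_of_ne hle ?_⟩
    intro heq
    exact hne (congrArg Subtype.val (π.injective (Fin.ext (Fin.val_eq_of_eq heq))))
  · rintro ⟨h, hlt⟩
    refine ⟨?_, h, hlt.le⟩
    rintro rfl
    have : π ⟨q, h⟩ = π ⟨q, hp⟩ := rfl
    exact absurd hlt (by simp)

end

lemma card_attach_filter {α : Type*} (s : Finset α) (pr : α → Prop) [DecidablePred pr] :
    (s.attach.filter fun q => pr q.1).card = (s.filter pr).card := by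
  rw [Finset.card_filter, Finset.card_filter, Finset.sum_attach s (fun x => if pr x then 1 else 0)]

lemma card_S1 {P : Finset (ℝ × ℝ)} {z : ℝ × ℝ} (hgx : ∀ q ∈ P, z.1 ≠ q.1) :
    (P.attach.filter fun q => z.2 ≤ q.1.2).card = neCount P z + nwCount P z := by
  classical
  rw [card_attach_filter P (fun q => z.2 ≤ q.2), neCount, nwCount,
    Finset.card_filter, Finset.card_filter, Finset.card_filter, ← Finset.sum_add_distrib]
  refine Finset.sum_congr rfl fun q hq => ?_
  rcases (hgx q hq).lt_or_gt with h | h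
  · by_cases h2 : z.2 ≤ q.2 <;> simp [h2, h.le, h.not_ge]
  · by_cases h2 : z.2 ≤ q.2 <;> simp [h2, h.le, h.not_ge]

lemma card_S2 {P : Finset (ℝ × ℝ)} {z : ℝ × ℝ} (hgy : ∀ q ∈ P, z.2 ≠ q.2) :
    (P.attach.filter fun q => z.1 ≤ q.1.1).card = neCount P z + seCount P z := by
  classical
  rw [card_attach_filter P (fun q => z.1 ≤ q.1), neCount, seCount,
    Finset.card_filter, Finset.card_filter, Finset.card_filter, ← Finset.sum_add_distrib]
  refine Finset.sum_congr rfl fun q hq => ?_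
  rcases (hgy q hq).lt_or_gt with h | h
  · by_cases h2 : z.1 ≤ q.1 <;> simp [h2, h.le, h.not_ge]
  · by_cases h2 : z.1 ≤ q.1 <;> simp [h2, h.le, h.not_ge]

lemma card_S12 {P : Finset (ℝ × ℝ)} {z : ℝ × ℝ} (hgx : ∀ q ∈ P, z.1 ≠ q.1)
    (hgy : ∀ q ∈ P, z.2 ≠ q.2) :
    ((P.attach.filter fun q => z.2 ≤ q.1.2) ∪
      (P.attach.filter fun q => z.1 ≤ q.1.1)).card
      = neCount P z + nwCount P z + seCount P z := by
  classical
  rw [← Finset.filter_or, card_attach_filter P (fun q => z.2 ≤ q.2 ∨ z.1 ≤ q.1),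
    neCount, nwCount, seCount, Finset.card_filter, Finset.card_filter, Finset.card_filter,
    Finset.card_filter, ← Finset.sum_add_distrib, ← Finset.sum_add_distrib]
  refine Finset.sum_congr rfl fun q hq => ?_
  rcases (hgx q hq).lt_or_gt with h1 | h1 <;> rcases (hgy q hq).lt_or_gt with h2 | h2 <;>
    simp [h1.le, h1.not_ge, h2.le, h2.not_ge]

section KeyLemma

variable {P : Finset (ℝ × ℝ)} {p : ℝ × ℝ}

set_option maxHeartbeats 1000000 in
/-- The structural description of pivotality. -/
lemma pivot_iff (hp : p ∈ P) (π : {x // x ∈ P} ≃ Fin P.card)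
    {z : ℝ × ℝ} (hz1 : 0 < z.1) (hz2 : 0 < z.2)
    (hgx : ∀ q ∈ P, z.1 ≠ q.1) (hgy : ∀ q ∈ P, z.2 ≠ q.2) :
    (z ∈ boxSet (Qset P p hp π) ∧ z ∉ boxSet ((Qset P p hp π).erase p)) ↔
      ((((⟨p, hp⟩ : {x // x ∈ P}) ∈ (P.attach.filter fun q => z.2 ≤ q.1.2) ∧
          ∀ q ∈ (P.attach.filter fun q => z.2 ≤ q.1.2), π ⟨p, hp⟩ ≤ π q) ∧
        (∃ q ∈ (P.attach.filter fun q => z.1 ≤ q.1.1), π q ≤ π ⟨p, hp⟩)) ∨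
      ((((⟨p, hp⟩ : {x // x ∈ P}) ∈ (P.attach.filter fun q => z.1 ≤ q.1.1) ∧
          ∀ q ∈ (P.attach.filter fun q => z.1 ≤ q.1.1), π ⟨p, hp⟩ ≤ π q) ∧
        (∃ q ∈ (P.attach.filter fun q => z.2 ≤ q.1.2), π q ≤ π ⟨p, hp⟩)))) := by
  classical
  set p' : {x // x ∈ P} := ⟨p, hp⟩ with hp'
  set S1 := P.attach.filter fun q => z.2 ≤ q.1.2 with hS1
  set S2 := P.attach.filter fun q => z.1 ≤ q.1.1 with hS2
  -- membership in boxSet of Qset in terms of Hit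
  have hbox : z ∈ boxSet (Qset P p hp π) ↔
      (∃ q ∈ S1, π q ≤ π p') ∧ (∃ q ∈ S2, π q ≤ π p') := by
    simp only [boxSet, Set.mem_setOf_eq, hz1, hz2, true_and]
    constructor
    · rintro ⟨⟨q, hq, hlt⟩, ⟨r, hr, hlt'⟩⟩
      obtain ⟨hqP, hqle⟩ := (mem_Qset hp π).1 hq
      obtain ⟨hrP, hrle⟩ := (mem_Qset hp π).1 hr
      exact ⟨⟨⟨r, hrP⟩, Finset.mem_filter.2 ⟨Finset.mem_attach _ _, hlt'.le⟩, hrle⟩,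
             ⟨⟨q, hqP⟩, Finset.mem_filter.2 ⟨Finset.mem_attach _ _, hlt.le⟩, hqle⟩⟩
    · rintro ⟨⟨q, hq, hle⟩, ⟨r, hr, hle'⟩⟩
      have hq2 := (Finset.mem_filter.1 hq).2
      have hr1 := (Finset.mem_filter.1 hr).2
      refine ⟨⟨r.1, (mem_Qset hp π).2 ⟨r.2, by simpa using hle'⟩,
        lt_of_le_of_ne hr1 (hgx r.1 r.2)⟩,
        ⟨q.1, (mem_Qset hp π).2 ⟨q.2, by simpa using hle⟩,
        lt_of_le_of_ne hq2 (hgy q.1 q.2)⟩⟩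
  have hbox' : z ∈ boxSet ((Qset P p hp π).erase p) ↔
      (∃ q ∈ S1, π q < π p') ∧ (∃ q ∈ S2, π q < π p') := by
    simp only [boxSet, Set.mem_setOf_eq, hz1, hz2, true_and]
    constructor
    · rintro ⟨⟨q, hq, hlt⟩, ⟨r, hr, hlt'⟩⟩
      obtain ⟨hqP, hqle⟩ := (mem_erase_Qset hp π).1 hq
      obtain ⟨hrP, hrle⟩ := (mem_erase_Qset hp π).1 hr
      exact ⟨⟨⟨r, hrP⟩, Finset.mem_filter.2 ⟨Finset.mem_attach _ _, hlt'.le⟩, hrle⟩,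
             ⟨⟨q, hqP⟩, Finset.mem_filter.2 ⟨Finset.mem_attach _ _, hlt.le⟩, hqle⟩⟩
    · rintro ⟨⟨q, hq, hle⟩, ⟨r, hr, hle'⟩⟩
      have hq2 := (Finset.mem_filter.1 hq).2
      have hr1 := (Finset.mem_filter.1 hr).2
      refine ⟨⟨r.1, (mem_erase_Qset hp π).2 ⟨r.2, by simpa using hle'⟩,
        lt_of_le_of_ne hr1 (hgx r.1 r.2)⟩,
        ⟨q.1, (mem_erase_Qset hp π).2 ⟨q.2, by simpa using hle⟩,
        lt_of_le_of_ne hq2 (hgy q.1 q.2)⟩⟩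
  have hMS : ∀ S : Finset {x // x ∈ P},
      ((∃ q ∈ S, π q ≤ π p') ∧ ¬(∃ q ∈ S, π q < π p')) ↔
        (p' ∈ S ∧ ∀ q ∈ S, π p' ≤ π q) := by
    intro S
    constructor
    · rintro ⟨⟨q, hq, hle⟩, hn⟩
      push_neg at hn
      have hq' : π q = π p' := le_antisymm hle (hn q hq)
      have hqp : q = p' := π.injective hq'
      exact ⟨hqp ▸ hq, hn⟩
    · rintro ⟨hpS, hmin⟩
      exact ⟨⟨p', hpS, le_refl _⟩, fun ⟨q, hq, hlt⟩ => absurd hlt (not_lt.2 (hmin q hq))⟩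
  rw [hbox, hbox']
  have e1 := hMS S1
  have e2 := hMS S2
  constructor
  · rintro ⟨⟨h1, h2⟩, hn⟩
    rcases not_and_or.1 hn with hn1 | hn2
    · exact Or.inl ⟨e1.1 ⟨h1, hn1⟩, h2⟩
    · exact Or.inr ⟨e2.1 ⟨h2, hn2⟩, h1⟩
  · rintro (⟨hM1, hH2⟩ | ⟨hM2, hH1⟩)
    · obtain ⟨hH1, hn1⟩ := e1.2 hM1
      exact ⟨⟨hH1, hH2⟩, fun h => hn1 h.1⟩
    · obtain ⟨hH2, hn2⟩ := e2.2 hM2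
      exact ⟨⟨hH1, hH2⟩, fun h => hn2 h.2⟩

end KeyLemma

lemma count_orMin {α : Type*} [Fintype α] [DecidableEq α] {n : ℕ}
    (p : α) (SA SB : Finset α) :
    (Finset.univ.filter fun π : α ≃ Fin n =>
        (∀ q ∈ SA, π p ≤ π q) ∨ (∀ q ∈ SB, π p ≤ π q)).card +
      (Finset.univ.filter fun π : α ≃ Fin n => ∀ q ∈ SA ∪ SB, π p ≤ π q).card =
    (Finset.univ.filter fun π : α ≃ Fin n => ∀ q ∈ SA, π p ≤ π q).card +
      (Finset.univ.filter fun π : α ≃ Fin n => ∀ q ∈ SB, π p ≤ π q).card := by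
  classical
  rw [Finset.filter_or]
  have h2 : (Finset.univ.filter fun π : α ≃ Fin n => ∀ q ∈ SA ∪ SB, π p ≤ π q) =
      (Finset.univ.filter fun π : α ≃ Fin n => ∀ q ∈ SA, π p ≤ π q) ∩
        (Finset.univ.filter fun π : α ≃ Fin n => ∀ q ∈ SB, π p ≤ π q) := by
    rw [← Finset.filter_and]
    apply Finset.filter_congr
    intro π _
    constructor
    · intro h
      exact ⟨fun q hq => h q (Finset.mem_union_left _ hq),
             fun q hq => h q (Finset.mem_union_right _ hq)⟩
    · rintro ⟨h1, h2⟩ q hq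
      rcases Finset.mem_union.1 hq with h | h
      · exact h1 q h
      · exact h2 q h
  rw [h2]
  exact Finset.card_union_add_card_inter _ _

lemma count_MinHit {α : Type*} [Fintype α] [DecidableEq α] {n : ℕ}
    (p : α) (SA SB : Finset α) (hpB : p ∉ SB) :
    (Finset.univ.filter fun π : α ≃ Fin n =>
        (∀ q ∈ SA, π p ≤ π q) ∧ (∃ q ∈ SB, π q ≤ π p)).card +
      (Finset.univ.filter fun π : α ≃ Fin n => ∀ q ∈ SA ∪ SB, π p ≤ π q).card =
    (Finset.univ.filter fun π : α ≃ Fin n => ∀ q ∈ SA, π p ≤ π q).card := by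
  classical
  have key := Finset.card_filter_add_card_filter_not
    (s := Finset.univ.filter fun π : α ≃ Fin n => ∀ q ∈ SA, π p ≤ π q)
    (p := fun π : α ≃ Fin n => ∃ q ∈ SB, π q ≤ π p)
  rw [Finset.filter_filter, Finset.filter_filter] at key
  have hA : (Finset.univ.filter fun π : α ≃ Fin n =>
      (∀ q ∈ SA, π p ≤ π q) ∧ (∃ q ∈ SB, π q ≤ π p)) =
      Finset.univ.filter fun π : α ≃ Fin n =>
        (∀ q ∈ SA, π p ≤ π q) ∧ ∃ q ∈ SB, π q ≤ π p := rfl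
  have hB : (Finset.univ.filter fun π : α ≃ Fin n =>
      (∀ q ∈ SA, π p ≤ π q) ∧ ¬∃ q ∈ SB, π q ≤ π p) =
      Finset.univ.filter fun π : α ≃ Fin n => ∀ q ∈ SA ∪ SB, π p ≤ π q := by
    apply Finset.filter_congr
    intro π _
    constructor
    · rintro ⟨h1, h2⟩ q hq
      push_neg at h2
      rcases Finset.mem_union.1 hq with h | h
      · exact h1 q h
      · exact (h2 q h).le
    · intro h
      refine ⟨fun q hq => h q (Finset.mem_union_left _ hq), ?_⟩
      rintro ⟨q, hq, hle⟩
      have h1 := h q (Finset.mem_union_right _ hq)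
      have : q = p := π.injective (le_antisymm hle h1)
      exact hpB (this ▸ hq)
  rw [hB] at key
  exact key

lemma div_arith3 {F s1 s2 s12 c1 c2 c12 cD : ℝ} (hF : 0 < F)
    (h1 : c1 * s1 = F) (h2 : c2 * s2 = F) (h12 : c12 * s12 = F)
    (hs1 : 0 < s1) (hs2 : 0 < s2) (hs12 : 0 < s12)
    (hD : cD + c12 = c1 + c2) :
    cD / F = 1 / s1 + 1 / s2 - 1 / s12 := by
  have e1 : c1 = F / s1 := (eq_div_iff hs1.ne').2 h1
  have e2 : c2 = F / s2 := (eq_div_iff hs2.ne').2 h2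
  have e12 : c12 = F / s12 := (eq_div_iff hs12.ne').2 h12
  have : cD = F / s1 + F / s2 - F / s12 := by rw [← e1, ← e2, ← e12]; linarith
  rw [this]
  field_simp

lemma div_arith2 {F s1 s12 c1 c12 cD : ℝ} (hF : 0 < F)
    (h1 : c1 * s1 = F) (h12 : c12 * s12 = F)
    (hs1 : 0 < s1) (hs12 : 0 < s12)
    (hD : cD + c12 = c1) :
    cD / F = 1 / s1 - 1 / s12 := by
  have e1 : c1 = F / s1 := (eq_div_iff hs1.ne').2 h1
  have e12 : c12 = F / s12 := (eq_div_iff hs12.ne').2 h12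
  have : cD = F / s1 - F / s12 := by rw [← e1, ← e12]; linarith
  rw [this]
  field_simp

set_option maxHeartbeats 1000000 in
lemma key_pointwise (P : Finset (ℝ × ℝ)) (p : ℝ × ℝ) (hp : p ∈ P)
    (hp1 : 0 < p.1) (hp2 : 0 < p.2)
    (z : ℝ × ℝ) (hgx : ∀ q ∈ P, z.1 ≠ q.1) (hgy : ∀ q ∈ P, z.2 ≠ q.2) :
    (∑ π : {x // x ∈ P} ≃ Fin P.card,
      ((boxSet (Qset P p hp π)).indicator (fun _ => (1:ℝ)) z -
        (boxSet ((Qset P p hp π).erase p)).indicator (fun _ => (1:ℝ)) z)) / (P.card).factorial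
    = (Set.Ioo (0:ℝ) p.1 ×ˢ Set.Ioo (0:ℝ) p.2).indicator (psiNE P) z
      + (Set.Ioo p.1 (P.sup' ⟨p, hp⟩ fun q => q.1) ×ˢ Set.Ioo (0:ℝ) p.2).indicator (psiNW P) z
      + (Set.Ioo (0:ℝ) p.1 ×ˢ Set.Ioo p.2 (P.sup' ⟨p, hp⟩ fun q => q.2)).indicator (psiSE P) z := by
  classical
  by_cases hz1 : 0 < z.1
  swap
  · have hnb : ∀ Q : Finset (ℝ × ℝ), z ∉ boxSet Q := fun Q h => hz1 h.1
    have h1 : z ∉ Set.Ioo (0:ℝ) p.1 ×ˢ Set.Ioo (0:ℝ) p.2 := fun h => hz1 h.1.1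
    have h2 : z ∉ Set.Ioo p.1 (P.sup' ⟨p, hp⟩ fun q => q.1) ×ˢ Set.Ioo (0:ℝ) p.2 :=
      fun h => hz1 (lt_trans hp1 h.1.1)
    have h3 : z ∉ Set.Ioo (0:ℝ) p.1 ×ˢ Set.Ioo p.2 (P.sup' ⟨p, hp⟩ fun q => q.2) :=
      fun h => hz1 h.1.1
    have hterm : ∀ π : {x // x ∈ P} ≃ Fin P.card,
        (boxSet (Qset P p hp π)).indicator (fun _ => (1:ℝ)) z -
          (boxSet ((Qset P p hp π).erase p)).indicator (fun _ => (1:ℝ)) z = 0 := fun π => by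
      rw [Set.indicator_of_notMem (hnb _), Set.indicator_of_notMem (hnb _), sub_zero]
    rw [Finset.sum_congr rfl fun π _ => hterm π, Finset.sum_const, smul_zero, zero_div,
      Set.indicator_of_notMem h1, Set.indicator_of_notMem h2, Set.indicator_of_notMem h3]
    ring
  by_cases hz2 : 0 < z.2
  swap
  · have hnb : ∀ Q : Finset (ℝ × ℝ), z ∉ boxSet Q := fun Q h => hz2 h.2.1
    have h1 : z ∉ Set.Ioo (0:ℝ) p.1 ×ˢ Set.Ioo (0:ℝ) p.2 := fun h => hz2 h.2.1
    have h2 : z ∉ Set.Ioo p.1 (P.sup' ⟨p, hp⟩ fun q => q.1) ×ˢ Set.Ioo (0:ℝ) p.2 :=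
      fun h => hz2 h.2.1
    have h3 : z ∉ Set.Ioo (0:ℝ) p.1 ×ˢ Set.Ioo p.2 (P.sup' ⟨p, hp⟩ fun q => q.2) :=
      fun h => hz2 (lt_trans hp2 h.2.1)
    have hterm : ∀ π : {x // x ∈ P} ≃ Fin P.card,
        (boxSet (Qset P p hp π)).indicator (fun _ => (1:ℝ)) z -
          (boxSet ((Qset P p hp π).erase p)).indicator (fun _ => (1:ℝ)) z = 0 := fun π => by
      rw [Set.indicator_of_notMem (hnb _), Set.indicator_of_notMem (hnb _), sub_zero]
    rw [Finset.sum_congr rfl fun π _ => hterm π, Finset.sum_const, smul_zero, zero_div,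
      Set.indicator_of_notMem h1, Set.indicator_of_notMem h2, Set.indicator_of_notMem h3]
    ring
  -- main case
  set p' : {x // x ∈ P} := ⟨p, hp⟩ with hp'def
  set S1 := P.attach.filter fun q => z.2 ≤ q.1.2 with hS1def
  set S2 := P.attach.filter fun q => z.1 ≤ q.1.1 with hS2def
  -- turn the sum into a cardinality
  have hsum : (∑ π : {x // x ∈ P} ≃ Fin P.card,
      ((boxSet (Qset P p hp π)).indicator (fun _ => (1:ℝ)) z -
        (boxSet ((Qset P p hp π).erase p)).indicator (fun _ => (1:ℝ)) z)) =
      ((Finset.univ.filter fun π : {x // x ∈ P} ≃ Fin P.card =>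
        ((p' ∈ S1 ∧ ∀ q ∈ S1, π p' ≤ π q) ∧ (∃ q ∈ S2, π q ≤ π p')) ∨
        ((p' ∈ S2 ∧ ∀ q ∈ S2, π p' ≤ π q) ∧ (∃ q ∈ S1, π q ≤ π p'))).card : ℝ) := by
    rw [← Finset.sum_boole]
    refine Finset.sum_congr rfl fun π _ => ?_
    have hiff := pivot_iff hp π hz1 hz2 hgx hgy
    by_cases h1 : z ∈ boxSet (Qset P p hp π)
    · by_cases h2 : z ∈ boxSet ((Qset P p hp π).erase p)
      · rw [Set.indicator_of_mem h1, Set.indicator_of_mem h2, if_neg, sub_self]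
        rw [← hiff]; exact fun h => h.2 h2
      · rw [Set.indicator_of_mem h1, Set.indicator_of_notMem h2, if_pos, sub_zero]
        rw [← hiff]; exact ⟨h1, h2⟩
    · have h2 : z ∉ boxSet ((Qset P p hp π).erase p) :=
        fun h => h1 (boxSet_mono (Finset.erase_subset _ _) h)
      rw [Set.indicator_of_notMem h1, Set.indicator_of_notMem h2, if_neg, sub_self]
      rw [← hiff]; exact fun h => h1 h.1
  rw [hsum]
  have hn : Fintype.card {x // x ∈ P} = P.card := Fintype.card_coe P
  have hFpos : (0:ℝ) < (P.card).factorial := by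
    exact_mod_cast Nat.factorial_pos _
  have hzp1 : z.1 ≠ p.1 := hgx p hp
  have hzp2 : z.2 ≠ p.2 := hgy p hp
  rcases hzp1.lt_or_gt with hx1 | hx1 <;> rcases hzp2.lt_or_gt with hy1 | hy1
  · -- NE case : z.1 < p.1, z.2 < p.2
    have hp1S : p' ∈ S1 := Finset.mem_filter.2 ⟨Finset.mem_attach _ _, hy1.le⟩
    have hp2S : p' ∈ S2 := Finset.mem_filter.2 ⟨Finset.mem_attach _ _, hx1.le⟩
    have hfil : (Finset.univ.filter fun π : {x // x ∈ P} ≃ Fin P.card =>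
        ((p' ∈ S1 ∧ ∀ q ∈ S1, π p' ≤ π q) ∧ (∃ q ∈ S2, π q ≤ π p')) ∨
        ((p' ∈ S2 ∧ ∀ q ∈ S2, π p' ≤ π q) ∧ (∃ q ∈ S1, π q ≤ π p'))) =
        Finset.univ.filter fun π : {x // x ∈ P} ≃ Fin P.card =>
          (∀ q ∈ S1, π p' ≤ π q) ∨ (∀ q ∈ S2, π p' ≤ π q) := by
      apply Finset.filter_congr
      intro π _
      constructor
      · rintro (⟨⟨_, h⟩, _⟩ | ⟨⟨_, h⟩, _⟩)
        exacts [Or.inl h, Or.inr h]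
      · rintro (h | h)
        · exact Or.inl ⟨⟨hp1S, h⟩, ⟨p', hp2S, le_refl _⟩⟩
        · exact Or.inr ⟨⟨hp2S, h⟩, ⟨p', hp1S, le_refl _⟩⟩
    rw [hfil]
    have hc1 := count_min hn p' S1 hp1S
    have hc2 := count_min hn p' S2 hp2S
    have hc12 := count_min hn p' (S1 ∪ S2) (Finset.mem_union_left _ hp1S)
    have hcOr := count_orMin (n := P.card) p' S1 S2
    have hs1 : S1.card = neCount P z + nwCount P z := card_S1 hgx
    have hs2 : S2.card = neCount P z + seCount P z := card_S2 hgy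
    have hs12 : (S1 ∪ S2).card = neCount P z + nwCount P z + seCount P z := card_S12 hgx hgy
    have hmem : z ∈ Set.Ioo (0:ℝ) p.1 ×ˢ Set.Ioo (0:ℝ) p.2 := ⟨⟨hz1, hx1⟩, ⟨hz2, hy1⟩⟩
    have hm2 : z ∉ Set.Ioo p.1 (P.sup' ⟨p, hp⟩ fun q => q.1) ×ˢ Set.Ioo (0:ℝ) p.2 :=
      fun h => absurd h.1.1 (not_lt.2 hx1.le)
    have hm3 : z ∉ Set.Ioo (0:ℝ) p.1 ×ˢ Set.Ioo p.2 (P.sup' ⟨p, hp⟩ fun q => q.2) :=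
      fun h => absurd h.2.1 (not_lt.2 hy1.le)
    rw [Set.indicator_of_mem hmem, Set.indicator_of_notMem hm2, Set.indicator_of_notMem hm3,
      add_zero, add_zero]
    unfold psiNE
    have e1 : ((Finset.univ.filter fun π : {x // x ∈ P} ≃ Fin P.card =>
        ∀ q ∈ S1, π p' ≤ π q).card : ℝ) * ((neCount P z : ℝ) + (nwCount P z : ℝ)) =
        ((P.card).factorial : ℝ) := by exact_mod_cast hs1 ▸ hc1
    have e2 : ((Finset.univ.filter fun π : {x // x ∈ P} ≃ Fin P.card =>
        ∀ q ∈ S2, π p' ≤ π q).card : ℝ) * ((neCount P z : ℝ) + (seCount P z : ℝ)) =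
        ((P.card).factorial : ℝ) := by exact_mod_cast hs2 ▸ hc2
    have e12 : ((Finset.univ.filter fun π : {x // x ∈ P} ≃ Fin P.card =>
        ∀ q ∈ S1 ∪ S2, π p' ≤ π q).card : ℝ) *
        ((neCount P z : ℝ) + (nwCount P z : ℝ) + (seCount P z : ℝ)) =
        ((P.card).factorial : ℝ) := by exact_mod_cast hs12 ▸ hc12
    have h1p : (0:ℝ) < (neCount P z : ℝ) + (nwCount P z : ℝ) := by
      exact_mod_cast hs1 ▸ Finset.card_pos.2 ⟨p', hp1S⟩
    have h2p : (0:ℝ) < (neCount P z : ℝ) + (seCount P z : ℝ) := by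
      exact_mod_cast hs2 ▸ Finset.card_pos.2 ⟨p', hp2S⟩
    have h12p : (0:ℝ) < (neCount P z : ℝ) + (nwCount P z : ℝ) + (seCount P z : ℝ) := by
      exact_mod_cast hs12 ▸ Finset.card_pos.2 ⟨p', Finset.mem_union_left _ hp1S⟩
    have hd : ((Finset.univ.filter fun π : {x // x ∈ P} ≃ Fin P.card =>
        (∀ q ∈ S1, π p' ≤ π q) ∨ (∀ q ∈ S2, π p' ≤ π q)).card : ℝ) +
        ((Finset.univ.filter fun π : {x // x ∈ P} ≃ Fin P.card =>
          ∀ q ∈ S1 ∪ S2, π p' ≤ π q).card : ℝ) =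
        ((Finset.univ.filter fun π : {x // x ∈ P} ≃ Fin P.card =>
          ∀ q ∈ S1, π p' ≤ π q).card : ℝ) +
        ((Finset.univ.filter fun π : {x // x ∈ P} ≃ Fin P.card =>
          ∀ q ∈ S2, π p' ≤ π q).card : ℝ) := by exact_mod_cast hcOr
    exact div_arith3 hFpos e1 e2 e12 h1p h2p h12p hd
  · -- SE case : z.1 < p.1, p.2 < z.2
    have hp2S : p' ∈ S2 := Finset.mem_filter.2 ⟨Finset.mem_attach _ _, hx1.le⟩
    have hp1S' : p' ∉ S1 := fun h => absurd (Finset.mem_filter.1 h).2 (not_le.2 hy1)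
    have hfil : (Finset.univ.filter fun π : {x // x ∈ P} ≃ Fin P.card =>
        ((p' ∈ S1 ∧ ∀ q ∈ S1, π p' ≤ π q) ∧ (∃ q ∈ S2, π q ≤ π p')) ∨
        ((p' ∈ S2 ∧ ∀ q ∈ S2, π p' ≤ π q) ∧ (∃ q ∈ S1, π q ≤ π p'))) =
        Finset.univ.filter fun π : {x // x ∈ P} ≃ Fin P.card =>
          (∀ q ∈ S2, π p' ≤ π q) ∧ (∃ q ∈ S1, π q ≤ π p') := by
      apply Finset.filter_congr
      intro π _
      constructor
      · rintro (⟨⟨hmem, _⟩, _⟩ | ⟨⟨_, h⟩, hH⟩)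
        · exact absurd hmem hp1S'
        · exact ⟨h, hH⟩
      · rintro ⟨h, hH⟩
        exact Or.inr ⟨⟨hp2S, h⟩, hH⟩
    rw [hfil]
    have hc2 := count_min hn p' S2 hp2S
    have hc12 := count_min hn p' (S2 ∪ S1) (Finset.mem_union_left _ hp2S)
    have hMH := count_MinHit (n := P.card) p' S2 S1 hp1S'
    have hs2 : S2.card = neCount P z + seCount P z := card_S2 hgy
    have hs12 : (S2 ∪ S1).card = neCount P z + nwCount P z + seCount P z := by
      rw [Finset.union_comm]; exact card_S12 hgx hgy
    obtain ⟨qY, hqY, hYeq⟩ := Finset.exists_mem_eq_sup' (⟨p, hp⟩ : P.Nonempty) fun q => (q:ℝ×ℝ).2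
    have hzY : z.2 ≠ P.sup' ⟨p, hp⟩ fun q => q.2 := by rw [hYeq]; exact hgy qY hqY
    rcases hzY.lt_or_gt with hY | hY
    · -- z in the SE region
      have hmem : z ∈ Set.Ioo (0:ℝ) p.1 ×ˢ Set.Ioo p.2 (P.sup' ⟨p, hp⟩ fun q => q.2) :=
        ⟨⟨hz1, hx1⟩, ⟨hy1, hY⟩⟩
      have hm1 : z ∉ Set.Ioo (0:ℝ) p.1 ×ˢ Set.Ioo (0:ℝ) p.2 :=
        fun h => absurd h.2.2 (not_lt.2 hy1.le)
      have hm2 : z ∉ Set.Ioo p.1 (P.sup' ⟨p, hp⟩ fun q => q.1) ×ˢ Set.Ioo (0:ℝ) p.2 :=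
        fun h => absurd h.1.1 (not_lt.2 hx1.le)
      rw [Set.indicator_of_mem hmem, Set.indicator_of_notMem hm1, Set.indicator_of_notMem hm2,
        zero_add, zero_add]
      unfold psiSE
      have e2 : ((Finset.univ.filter fun π : {x // x ∈ P} ≃ Fin P.card =>
          ∀ q ∈ S2, π p' ≤ π q).card : ℝ) * ((neCount P z : ℝ) + (seCount P z : ℝ)) =
          ((P.card).factorial : ℝ) := by exact_mod_cast hs2 ▸ hc2
      have e12 : ((Finset.univ.filter fun π : {x // x ∈ P} ≃ Fin P.card =>
          ∀ q ∈ S2 ∪ S1, π p' ≤ π q).card : ℝ) *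
          ((neCount P z : ℝ) + (nwCount P z : ℝ) + (seCount P z : ℝ)) =
          ((P.card).factorial : ℝ) := by exact_mod_cast hs12 ▸ hc12
      have h2p : (0:ℝ) < (neCount P z : ℝ) + (seCount P z : ℝ) := by
        exact_mod_cast hs2 ▸ Finset.card_pos.2 ⟨p', hp2S⟩
      have h12p : (0:ℝ) < (neCount P z : ℝ) + (nwCount P z : ℝ) + (seCount P z : ℝ) := by
        exact_mod_cast hs12 ▸ Finset.card_pos.2 ⟨p', Finset.mem_union_left _ hp2S⟩
      have hd : ((Finset.univ.filter fun π : {x // x ∈ P} ≃ Fin P.card =>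
          (∀ q ∈ S2, π p' ≤ π q) ∧ (∃ q ∈ S1, π q ≤ π p')).card : ℝ) +
          ((Finset.univ.filter fun π : {x // x ∈ P} ≃ Fin P.card =>
            ∀ q ∈ S2 ∪ S1, π p' ≤ π q).card : ℝ) =
          ((Finset.univ.filter fun π : {x // x ∈ P} ≃ Fin P.card =>
            ∀ q ∈ S2, π p' ≤ π q).card : ℝ) := by exact_mod_cast hMH
      exact div_arith2 hFpos e2 e12 h2p h12p hd
    · -- z above the whole configuration : everything vanishes
      have hS1e : S1 = ∅ := by
        rw [hS1def]
        rw [Finset.filter_eq_empty_iff]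
        intro q _
        exact not_le.2 (lt_of_le_of_lt (le_trans (Finset.le_sup' (fun r => (r:ℝ×ℝ).2) q.2)
          (le_refl _)) hY)
      have hcard0 : (Finset.univ.filter fun π : {x // x ∈ P} ≃ Fin P.card =>
          (∀ q ∈ S2, π p' ≤ π q) ∧ (∃ q ∈ S1, π q ≤ π p')).card = 0 := by
        rw [Finset.card_eq_zero, Finset.filter_eq_empty_iff]
        rintro π _ ⟨_, q, hq, _⟩
        rw [hS1e] at hq
        exact absurd hq (Finset.notMem_empty _)
      have hm1 : z ∉ Set.Ioo (0:ℝ) p.1 ×ˢ Set.Ioo (0:ℝ) p.2 :=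
        fun h => absurd h.2.2 (not_lt.2 hy1.le)
      have hm2 : z ∉ Set.Ioo p.1 (P.sup' ⟨p, hp⟩ fun q => q.1) ×ˢ Set.Ioo (0:ℝ) p.2 :=
        fun h => absurd h.1.1 (not_lt.2 hx1.le)
      have hm3 : z ∉ Set.Ioo (0:ℝ) p.1 ×ˢ Set.Ioo p.2 (P.sup' ⟨p, hp⟩ fun q => q.2) :=
        fun h => absurd h.2.2 (not_lt.2 hY.le)
      rw [hcard0, Set.indicator_of_notMem hm1, Set.indicator_of_notMem hm2,
        Set.indicator_of_notMem hm3]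
      norm_num
  · -- NW case : p.1 < z.1, z.2 < p.2
    have hp1S : p' ∈ S1 := Finset.mem_filter.2 ⟨Finset.mem_attach _ _, hy1.le⟩
    have hp2S' : p' ∉ S2 := fun h => absurd (Finset.mem_filter.1 h).2 (not_le.2 hx1)
    have hfil : (Finset.univ.filter fun π : {x // x ∈ P} ≃ Fin P.card =>
        ((p' ∈ S1 ∧ ∀ q ∈ S1, π p' ≤ π q) ∧ (∃ q ∈ S2, π q ≤ π p')) ∨
        ((p' ∈ S2 ∧ ∀ q ∈ S2, π p' ≤ π q) ∧ (∃ q ∈ S1, π q ≤ π p'))) =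
        Finset.univ.filter fun π : {x // x ∈ P} ≃ Fin P.card =>
          (∀ q ∈ S1, π p' ≤ π q) ∧ (∃ q ∈ S2, π q ≤ π p') := by
      apply Finset.filter_congr
      intro π _
      constructor
      · rintro (⟨⟨_, h⟩, hH⟩ | ⟨⟨hmem, _⟩, _⟩)
        · exact ⟨h, hH⟩
        · exact absurd hmem hp2S'
      · rintro ⟨h, hH⟩
        exact Or.inl ⟨⟨hp1S, h⟩, hH⟩
    rw [hfil]
    have hc1 := count_min hn p' S1 hp1S
    have hc12 := count_min hn p' (S1 ∪ S2) (Finset.mem_union_left _ hp1S)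
    have hMH := count_MinHit (n := P.card) p' S1 S2 hp2S'
    have hs1 : S1.card = neCount P z + nwCount P z := card_S1 hgx
    have hs12 : (S1 ∪ S2).card = neCount P z + nwCount P z + seCount P z := card_S12 hgx hgy
    obtain ⟨qX, hqX, hXeq⟩ := Finset.exists_mem_eq_sup' (⟨p, hp⟩ : P.Nonempty) fun q => (q:ℝ×ℝ).1
    have hzX : z.1 ≠ P.sup' ⟨p, hp⟩ fun q => q.1 := by rw [hXeq]; exact hgx qX hqX
    rcases hzX.lt_or_gt with hX | hX
    · -- z in the NW region
      have hmem : z ∈ Set.Ioo p.1 (P.sup' ⟨p, hp⟩ fun q => q.1) ×ˢ Set.Ioo (0:ℝ) p.2 :=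
        ⟨⟨hx1, hX⟩, ⟨hz2, hy1⟩⟩
      have hm1 : z ∉ Set.Ioo (0:ℝ) p.1 ×ˢ Set.Ioo (0:ℝ) p.2 :=
        fun h => absurd h.1.2 (not_lt.2 hx1.le)
      have hm3 : z ∉ Set.Ioo (0:ℝ) p.1 ×ˢ Set.Ioo p.2 (P.sup' ⟨p, hp⟩ fun q => q.2) :=
        fun h => absurd h.1.2 (not_lt.2 hx1.le)
      rw [Set.indicator_of_mem hmem, Set.indicator_of_notMem hm1, Set.indicator_of_notMem hm3,
        zero_add, add_zero]
      unfold psiNW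
      have e1 : ((Finset.univ.filter fun π : {x // x ∈ P} ≃ Fin P.card =>
          ∀ q ∈ S1, π p' ≤ π q).card : ℝ) * ((neCount P z : ℝ) + (nwCount P z : ℝ)) =
          ((P.card).factorial : ℝ) := by exact_mod_cast hs1 ▸ hc1
      have e12 : ((Finset.univ.filter fun π : {x // x ∈ P} ≃ Fin P.card =>
          ∀ q ∈ S1 ∪ S2, π p' ≤ π q).card : ℝ) *
          ((neCount P z : ℝ) + (nwCount P z : ℝ) + (seCount P z : ℝ)) =
          ((P.card).factorial : ℝ) := by exact_mod_cast hs12 ▸ hc12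
      have h1p : (0:ℝ) < (neCount P z : ℝ) + (nwCount P z : ℝ) := by
        exact_mod_cast hs1 ▸ Finset.card_pos.2 ⟨p', hp1S⟩
      have h12p : (0:ℝ) < (neCount P z : ℝ) + (nwCount P z : ℝ) + (seCount P z : ℝ) := by
        exact_mod_cast hs12 ▸ Finset.card_pos.2 ⟨p', Finset.mem_union_left _ hp1S⟩
      have hd : ((Finset.univ.filter fun π : {x // x ∈ P} ≃ Fin P.card =>
          (∀ q ∈ S1, π p' ≤ π q) ∧ (∃ q ∈ S2, π q ≤ π p')).card : ℝ) +
          ((Finset.univ.filter fun π : {x // x ∈ P} ≃ Fin P.card =>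
            ∀ q ∈ S1 ∪ S2, π p' ≤ π q).card : ℝ) =
          ((Finset.univ.filter fun π : {x // x ∈ P} ≃ Fin P.card =>
            ∀ q ∈ S1, π p' ≤ π q).card : ℝ) := by exact_mod_cast hMH
      exact div_arith2 hFpos e1 e12 h1p h12p hd
    · -- z to the right of the whole configuration : everything vanishes
      have hS2e : S2 = ∅ := by
        rw [hS2def]
        rw [Finset.filter_eq_empty_iff]
        intro q _
        exact not_le.2 (lt_of_le_of_lt (Finset.le_sup' (fun r => (r:ℝ×ℝ).1) q.2) hX)
      have hcard0 : (Finset.univ.filter fun π : {x // x ∈ P} ≃ Fin P.card =>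
          (∀ q ∈ S1, π p' ≤ π q) ∧ (∃ q ∈ S2, π q ≤ π p')).card = 0 := by
        rw [Finset.card_eq_zero, Finset.filter_eq_empty_iff]
        rintro π _ ⟨_, q, hq, _⟩
        rw [hS2e] at hq
        exact absurd hq (Finset.notMem_empty _)
      have hm1 : z ∉ Set.Ioo (0:ℝ) p.1 ×ˢ Set.Ioo (0:ℝ) p.2 :=
        fun h => absurd h.1.2 (not_lt.2 hx1.le)
      have hm2 : z ∉ Set.Ioo p.1 (P.sup' ⟨p, hp⟩ fun q => q.1) ×ˢ Set.Ioo (0:ℝ) p.2 :=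
        fun h => absurd h.1.2 (not_lt.2 hX.le)
      have hm3 : z ∉ Set.Ioo (0:ℝ) p.1 ×ˢ Set.Ioo p.2 (P.sup' ⟨p, hp⟩ fun q => q.2) :=
        fun h => absurd h.1.2 (not_lt.2 hx1.le)
      rw [hcard0, Set.indicator_of_notMem hm1, Set.indicator_of_notMem hm2,
        Set.indicator_of_notMem hm3]
      norm_num
  · -- far case : p.1 < z.1, p.2 < z.2
    have hp1S' : p' ∉ S1 := fun h => absurd (Finset.mem_filter.1 h).2 (not_le.2 hy1)
    have hp2S' : p' ∉ S2 := fun h => absurd (Finset.mem_filter.1 h).2 (not_le.2 hx1)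
    have hcard0 : (Finset.univ.filter fun π : {x // x ∈ P} ≃ Fin P.card =>
        ((p' ∈ S1 ∧ ∀ q ∈ S1, π p' ≤ π q) ∧ (∃ q ∈ S2, π q ≤ π p')) ∨
        ((p' ∈ S2 ∧ ∀ q ∈ S2, π p' ≤ π q) ∧ (∃ q ∈ S1, π q ≤ π p'))).card = 0 := by
      rw [Finset.card_eq_zero, Finset.filter_eq_empty_iff]
      rintro π _ (⟨⟨hmem, _⟩, _⟩ | ⟨⟨hmem, _⟩, _⟩)
      · exact hp1S' hmem
      · exact hp2S' hmem
    have hm1 : z ∉ Set.Ioo (0:ℝ) p.1 ×ˢ Set.Ioo (0:ℝ) p.2 :=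
      fun h => absurd h.1.2 (not_lt.2 hx1.le)
    have hm2 : z ∉ Set.Ioo p.1 (P.sup' ⟨p, hp⟩ fun q => q.1) ×ˢ Set.Ioo (0:ℝ) p.2 :=
      fun h => absurd h.2.2 (not_lt.2 hy1.le)
    have hm3 : z ∉ Set.Ioo (0:ℝ) p.1 ×ˢ Set.Ioo p.2 (P.sup' ⟨p, hp⟩ fun q => q.2) :=
      fun h => absurd h.1.2 (not_lt.2 hx1.le)
    rw [hcard0, Set.indicator_of_notMem hm1, Set.indicator_of_notMem hm2,
      Set.indicator_of_notMem hm3]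
    norm_num


lemma measurable_neCount (P : Finset (ℝ × ℝ)) : Measurable fun z => (neCount P z : ℝ) := by
  classical
  have h : (fun z => (neCount P z : ℝ)) =
      fun z => ∑ q ∈ P, if z.1 ≤ q.1 ∧ z.2 ≤ q.2 then (1:ℝ) else 0 := by
    funext z; rw [neCount, Finset.card_filter]; push_cast; rfl
  rw [h]
  refine Finset.measurable_sum _ fun q _ => Measurable.ite ?_ measurable_const measurable_const
  have : {z : ℝ × ℝ | z.1 ≤ q.1 ∧ z.2 ≤ q.2} =
      {z : ℝ × ℝ | z.1 ≤ q.1} ∩ {z : ℝ × ℝ | z.2 ≤ q.2} := rfl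
  rw [this]
  exact (measurableSet_le measurable_fst measurable_const).inter
    (measurableSet_le measurable_snd measurable_const)

lemma measurable_nwCount (P : Finset (ℝ × ℝ)) : Measurable fun z => (nwCount P z : ℝ) := by
  classical
  have h : (fun z => (nwCount P z : ℝ)) =
      fun z => ∑ q ∈ P, if q.1 ≤ z.1 ∧ z.2 ≤ q.2 then (1:ℝ) else 0 := by
    funext z; rw [nwCount, Finset.card_filter]; push_cast; rfl
  rw [h]
  refine Finset.measurable_sum _ fun q _ => Measurable.ite ?_ measurable_const measurable_const
  have : {z : ℝ × ℝ | q.1 ≤ z.1 ∧ z.2 ≤ q.2} =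
      {z : ℝ × ℝ | q.1 ≤ z.1} ∩ {z : ℝ × ℝ | z.2 ≤ q.2} := rfl
  rw [this]
  exact (measurableSet_le measurable_const measurable_fst).inter
    (measurableSet_le measurable_snd measurable_const)

lemma measurable_seCount (P : Finset (ℝ × ℝ)) : Measurable fun z => (seCount P z : ℝ) := by
  classical
  have h : (fun z => (seCount P z : ℝ)) =
      fun z => ∑ q ∈ P, if z.1 ≤ q.1 ∧ q.2 ≤ z.2 then (1:ℝ) else 0 := by
    funext z; rw [seCount, Finset.card_filter]; push_cast; rfl
  rw [h]
  refine Finset.measurable_sum _ fun q _ => Measurable.ite ?_ measurable_const measurable_const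
  have : {z : ℝ × ℝ | z.1 ≤ q.1 ∧ q.2 ≤ z.2} =
      {z : ℝ × ℝ | z.1 ≤ q.1} ∩ {z : ℝ × ℝ | q.2 ≤ z.2} := rfl
  rw [this]
  exact (measurableSet_le measurable_fst measurable_const).inter
    (measurableSet_le measurable_const measurable_snd)

lemma measurable_psiNE (P : Finset (ℝ × ℝ)) : Measurable (psiNE P) := by
  unfold psiNE
  exact ((measurable_const.div ((measurable_neCount P).add (measurable_nwCount P))).add
    (measurable_const.div ((measurable_neCount P).add (measurable_seCount P)))).sub
    (measurable_const.div (((measurable_neCount P).add (measurable_nwCount P)).add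
      (measurable_seCount P)))

lemma measurable_psiNW (P : Finset (ℝ × ℝ)) : Measurable (psiNW P) := by
  unfold psiNW
  exact (measurable_const.div ((measurable_neCount P).add (measurable_nwCount P))).sub
    (measurable_const.div (((measurable_neCount P).add (measurable_nwCount P)).add
      (measurable_seCount P)))

lemma measurable_psiSE (P : Finset (ℝ × ℝ)) : Measurable (psiSE P) := by
  unfold psiSE
  exact (measurable_const.div ((measurable_neCount P).add (measurable_seCount P))).sub
    (measurable_const.div (((measurable_neCount P).add (measurable_nwCount P)).add
      (measurable_seCount P)))

lemma recip_nat_bounds (m : ℕ) : 0 ≤ 1 / (m:ℝ) ∧ 1 / (m:ℝ) ≤ 1 := by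
  rcases Nat.eq_zero_or_pos m with rfl | hm
  · norm_num
  · have h1 : (1:ℝ) ≤ m := by exact_mod_cast hm
    constructor
    · positivity
    · rw [div_le_one (by linarith)]; exact h1

lemma psiNE_bound (P : Finset (ℝ × ℝ)) (z : ℝ × ℝ) : ‖psiNE P z‖ ≤ 3 := by
  unfold psiNE
  have h1 := recip_nat_bounds (neCount P z + nwCount P z)
  have h2 := recip_nat_bounds (neCount P z + seCount P z)
  have h3 := recip_nat_bounds (neCount P z + nwCount P z + seCount P z)
  push_cast at h1 h2 h3
  rw [Real.norm_eq_abs, abs_le]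
  constructor <;> linarith [h1.1, h1.2, h2.1, h2.2, h3.1, h3.2]

lemma psiNW_bound (P : Finset (ℝ × ℝ)) (z : ℝ × ℝ) : ‖psiNW P z‖ ≤ 3 := by
  unfold psiNW
  have h1 := recip_nat_bounds (neCount P z + nwCount P z)
  have h3 := recip_nat_bounds (neCount P z + nwCount P z + seCount P z)
  push_cast at h1 h3
  rw [Real.norm_eq_abs, abs_le]
  constructor <;> linarith [h1.1, h1.2, h3.1, h3.2]

lemma psiSE_bound (P : Finset (ℝ × ℝ)) (z : ℝ × ℝ) : ‖psiSE P z‖ ≤ 3 := by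
  unfold psiSE
  have h2 := recip_nat_bounds (neCount P z + seCount P z)
  have h3 := recip_nat_bounds (neCount P z + nwCount P z + seCount P z)
  push_cast at h2 h3
  rw [Real.norm_eq_abs, abs_le]
  constructor <;> linarith [h2.1, h2.2, h3.1, h3.2]

lemma volume_Ioo_prod_ne_top (a b c d : ℝ) :
    volume ((Set.Ioo a b) ×ˢ (Set.Ioo c d)) ≠ ⊤ := by
  rw [MeasureTheory.Measure.volume_eq_prod ℝ ℝ, MeasureTheory.Measure.prod_prod,
    Real.volume_Ioo, Real.volume_Ioo]
  exact ENNReal.mul_ne_top ENNReal.ofReal_ne_top ENNReal.ofReal_ne_top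

lemma integrable_indicator_of_bounded {f : ℝ × ℝ → ℝ} (hf : Measurable f)
    {s : Set (ℝ × ℝ)} (hs : MeasurableSet s) (hfin : volume s ≠ ⊤) {C : ℝ}
    (hC : ∀ z, ‖f z‖ ≤ C) : Integrable (s.indicator f) volume := by
  rw [MeasureTheory.integrable_indicator_iff hs]
  exact MeasureTheory.Measure.integrableOn_of_bounded hfin hf.aestronglyMeasurable
    (MeasureTheory.ae_of_all _ fun z => hC z)

/-- Shapley values for the area of the anchored bounding box: for points in the
open positive quadrant with pairwise distinct coordinates and `p ∈ P`,
`φ(p, v_abb)` equals the integral of `ψ_NE` over `(0,x(p))×(0,y(p))`, plus the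
integral of `ψ_NW` over `(x(p),X)×(0,y(p))`, plus the integral of `ψ_SE` over
`(0,x(p))×(y(p),Y)`, where `X` and `Y` are the maximal coordinates of `P`. -/
theorem shapley_area_anchored_bounding_box (P : Finset (ℝ × ℝ))
    (hpos : ∀ q ∈ P, 0 < q.1 ∧ 0 < q.2)
    (hx : ∀ q ∈ P, ∀ q' ∈ P, q ≠ q' → q.1 ≠ q'.1)
    (hy : ∀ q ∈ P, ∀ q' ∈ P, q ≠ q' → q.2 ≠ q'.2)
    (p : ℝ × ℝ) (hp : p ∈ P) :
    shapley P
      (fun Q => if h : Q.Nonempty then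
          (Q.sup' h fun q => q.1) * (Q.sup' h fun q => q.2) else 0) p =
      (∫ z in (Set.Ioo (0 : ℝ) p.1) ×ˢ (Set.Ioo (0 : ℝ) p.2), psiNE P z) +
        (∫ z in (Set.Ioo p.1 (P.sup' ⟨p, hp⟩ fun q => q.1)) ×ˢ (Set.Ioo (0 : ℝ) p.2),
          psiNW P z) +
        (∫ z in (Set.Ioo (0 : ℝ) p.1) ×ˢ (Set.Ioo p.2 (P.sup' ⟨p, hp⟩ fun q => q.2)),
          psiSE P z) := by
  classical
  obtain ⟨hp1, hp2⟩ := hpos p hp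
  unfold shapley
  rw [dif_pos hp]
  have hQe : ∀ π : {x // x ∈ P} ≃ Fin P.card,
      ((P.attach.filter fun q => π q ≤ π ⟨p, hp⟩).image Subtype.val) = Qset P p hp π :=
    fun _ => rfl
  simp only [hQe]
  -- rewrite values as integrals of indicators
  have hv1 : ∀ π : {x // x ∈ P} ≃ Fin P.card,
      (if h : (Qset P p hp π).Nonempty then
          ((Qset P p hp π).sup' h fun q => q.1) * ((Qset P p hp π).sup' h fun q => q.2)
        else 0) = ∫ z, (boxSet (Qset P p hp π)).indicator (fun _ => (1:ℝ)) z :=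
    fun π => v_eq_integral (Qset_subset hp π) hpos
  have hv2 : ∀ π : {x // x ∈ P} ≃ Fin P.card,
      (if h : ((Qset P p hp π).erase p).Nonempty then
          (((Qset P p hp π).erase p).sup' h fun q => q.1) *
            (((Qset P p hp π).erase p).sup' h fun q => q.2)
        else 0) = ∫ z, (boxSet ((Qset P p hp π).erase p)).indicator (fun _ => (1:ℝ)) z :=
    fun π => v_eq_integral ((Finset.erase_subset _ _).trans (Qset_subset hp π)) hpos
  simp only [hv1, hv2]
  have hint : ∀ Q : Finset (ℝ × ℝ),
      Integrable ((boxSet Q).indicator fun _ => (1:ℝ)) volume := integrable_indicator_boxSet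
  rw [Finset.sum_congr rfl fun π _ => (MeasureTheory.integral_sub (hint _) (hint _)).symm]
  have hswap := MeasureTheory.integral_finset_sum (μ := volume)
    (Finset.univ : Finset ({x // x ∈ P} ≃ Fin P.card))
    (f := fun (π : {x // x ∈ P} ≃ Fin P.card) (z : ℝ × ℝ) =>
      (boxSet (Qset P p hp π)).indicator (fun _ => (1:ℝ)) z -
        (boxSet ((Qset P p hp π).erase p)).indicator (fun _ => (1:ℝ)) z)
    (fun π _ => (hint _).sub (hint _))
  rw [← hswap, ← MeasureTheory.integral_div]
  -- almost-everywhere identification with the psi functions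
  have hG : volume {z : ℝ × ℝ | ∃ q ∈ P, z.1 = q.1 ∨ z.2 = q.2} = 0 := by
    have hsub : {z : ℝ × ℝ | ∃ q ∈ P, z.1 = q.1 ∨ z.2 = q.2} ⊆
        ⋃ q ∈ (P : Set (ℝ × ℝ)), ({z : ℝ × ℝ | z.1 = q.1} ∪ {z : ℝ × ℝ | z.2 = q.2}) := by
      rintro z ⟨q, hq, h⟩
      exact Set.mem_biUnion hq h
    refine measure_mono_null hsub ((measure_biUnion_null_iff P.countable_toSet).2 ?_)
    intro q _
    refine measure_union_null ?_ ?_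
    · have h1 : {z : ℝ × ℝ | z.1 = q.1} = ({q.1} : Set ℝ) ×ˢ (Set.univ : Set ℝ) := by
        ext w
        exact ⟨fun h => ⟨h, trivial⟩, fun h => h.1⟩
      rw [h1, MeasureTheory.Measure.volume_eq_prod ℝ ℝ, MeasureTheory.Measure.prod_prod,
        Real.volume_singleton, zero_mul]
    · have h2 : {z : ℝ × ℝ | z.2 = q.2} = (Set.univ : Set ℝ) ×ˢ ({q.2} : Set ℝ) := by
        ext w
        exact ⟨fun h => ⟨trivial, h⟩, fun h => h.2⟩
      rw [h2, MeasureTheory.Measure.volume_eq_prod ℝ ℝ, MeasureTheory.Measure.prod_prod,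
        Real.volume_singleton, mul_zero]
  have hae : (fun z => (∑ π : {x // x ∈ P} ≃ Fin P.card,
      ((boxSet (Qset P p hp π)).indicator (fun _ => (1:ℝ)) z -
        (boxSet ((Qset P p hp π).erase p)).indicator (fun _ => (1:ℝ)) z)) /
        (P.card).factorial)
      =ᵐ[volume] fun z =>
        (Set.Ioo (0:ℝ) p.1 ×ˢ Set.Ioo (0:ℝ) p.2).indicator (psiNE P) z
        + (Set.Ioo p.1 (P.sup' ⟨p, hp⟩ fun q => q.1) ×ˢ Set.Ioo (0:ℝ) p.2).indicator
            (psiNW P) z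
        + (Set.Ioo (0:ℝ) p.1 ×ˢ Set.Ioo p.2 (P.sup' ⟨p, hp⟩ fun q => q.2)).indicator
            (psiSE P) z := by
    refine (measure_eq_zero_iff_ae_notMem.1 hG).mono fun z hz => ?_
    simp only [Set.mem_setOf_eq] at hz
    push_neg at hz
    exact key_pointwise P p hp hp1 hp2 z (fun q hq => (hz q hq).1) (fun q hq => (hz q hq).2)
  rw [MeasureTheory.integral_congr_ae hae]
  -- split the integral
  have i1 : Integrable ((Set.Ioo (0:ℝ) p.1 ×ˢ Set.Ioo (0:ℝ) p.2).indicator (psiNE P)) volume :=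
    integrable_indicator_of_bounded (measurable_psiNE P)
      (measurableSet_Ioo.prod measurableSet_Ioo) (volume_Ioo_prod_ne_top _ _ _ _)
      (psiNE_bound P)
  have i2 : Integrable ((Set.Ioo p.1 (P.sup' ⟨p, hp⟩ fun q => q.1) ×ˢ
      Set.Ioo (0:ℝ) p.2).indicator (psiNW P)) volume :=
    integrable_indicator_of_bounded (measurable_psiNW P)
      (measurableSet_Ioo.prod measurableSet_Ioo) (volume_Ioo_prod_ne_top _ _ _ _)
      (psiNW_bound P)
  have i3 : Integrable ((Set.Ioo (0:ℝ) p.1 ×ˢ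
      Set.Ioo p.2 (P.sup' ⟨p, hp⟩ fun q => q.2)).indicator (psiSE P)) volume :=
    integrable_indicator_of_bounded (measurable_psiSE P)
      (measurableSet_Ioo.prod measurableSet_Ioo) (volume_Ioo_prod_ne_top _ _ _ _)
      (psiSE_bound P)
  have hadd1 := MeasureTheory.integral_add (μ := volume)
    (f := fun z => (Set.Ioo (0:ℝ) p.1 ×ˢ Set.Ioo (0:ℝ) p.2).indicator (psiNE P) z
      + (Set.Ioo p.1 (P.sup' ⟨p, hp⟩ fun q => q.1) ×ˢ Set.Ioo (0:ℝ) p.2).indicator (psiNW P) z)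
    (g := fun z => (Set.Ioo (0:ℝ) p.1 ×ˢ
      Set.Ioo p.2 (P.sup' ⟨p, hp⟩ fun q => q.2)).indicator (psiSE P) z)
    (i1.add i2) i3
  have hadd2 := MeasureTheory.integral_add (μ := volume)
    (f := fun z => (Set.Ioo (0:ℝ) p.1 ×ˢ Set.Ioo (0:ℝ) p.2).indicator (psiNE P) z)
    (g := fun z => (Set.Ioo p.1 (P.sup' ⟨p, hp⟩ fun q => q.1) ×ˢ
      Set.Ioo (0:ℝ) p.2).indicator (psiNW P) z)
    i1 i2
  rw [hadd1, hadd2,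
    MeasureTheory.integral_indicator (measurableSet_Ioo.prod measurableSet_Ioo),
    MeasureTheory.integral_indicator (measurableSet_Ioo.prod measurableSet_Ioo),
    MeasureTheory.integral_indicator (measurableSet_Ioo.prod measurableSet_Ioo)]
end

section
/- Shapley values for the perimeter of the bounding box: let P be a set of n points in ℝ² with pairwise distinct x-coordinates and pairwise distinct y-coordinates, and let v_pbb(Q) = 2(max x(Q) − min x(Q)) + 2(max y(Q) − min y(Q)) for nonempty Q ⊆ P (the perimeter of the axis-parallel bounding box of Q), with v_pbb(∅)=0. Let x₁ < … < xₙ be the sorted x-coordinates and y₁ < … < yₙ the sorted y-coordinates of P. Then for every p ∈ P, writing x(p) = x_i and y(p) = y_k, φ(p, v_pbb) = 2·[Σ_{j=2}^{i} (xⱼ − x_{j−1})/(n−j+1) + Σ_{j=i}^{n−1} (x_{j+1} − xⱼ)/j − (xₙ − x₁)/n] + 2·[Σ_{j=2}^{k} (yⱼ − y_{j−1})/(n−j+1) + Σ_{j=k}^{n−1} (y_{j+1} − yⱼ)/j − (yₙ − y₁)/n]. -/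
open Finset

/-- indicator game: 1 if Q meets T -/
noncomputable def uT {α : Type*} [DecidableEq α] (T Q : Finset α) : ℝ :=
  if (Q ∩ T).Nonempty then 1 else 0

lemma uT_empty {α : Type*} [DecidableEq α] (T : Finset α) : uT T ∅ = 0 := by
  simp [uT]

lemma uT_of_subset {α : Type*} [DecidableEq α] {T Q : Finset α} (h : Q ⊆ T) (hQ : Q.Nonempty) :
    uT T Q = 1 := by
  rw [uT, if_pos]
  rwa [Finset.inter_eq_left.mpr h]

lemma shapley_congr {α : Type*} [DecidableEq α] (P : Finset α) (v w : Finset α → ℝ)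
    (h : ∀ Q ⊆ P, v Q = w Q) (p : α) : shapley P v p = shapley P w p := by
  unfold shapley
  split
  · congr 1
    apply Finset.sum_congr rfl
    intro π _
    have hS : ((P.attach.filter fun q => π q ≤ π ⟨p, ‹p ∈ P›⟩).image Subtype.val) ⊆ P := by
      intro x hx
      simp only [Finset.mem_image, Finset.mem_filter] at hx
      obtain ⟨q, _, rfl⟩ := hx
      exact q.2
    rw [h _ hS, h _ ((Finset.erase_subset _ _).trans hS)]
  · rfl

lemma shapley_add {α : Type*} [DecidableEq α] (P : Finset α) (v w : Finset α → ℝ) (p : α) :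
    shapley P (fun Q => v Q + w Q) p = shapley P v p + shapley P w p := by
  unfold shapley
  split
  · rw [← add_div, ← Finset.sum_add_distrib]
    congr 1
    apply Finset.sum_congr rfl
    intros; ring
  · ring

lemma shapley_smul {α : Type*} [DecidableEq α] (P : Finset α) (c : ℝ) (v : Finset α → ℝ) (p : α) :
    shapley P (fun Q => c * v Q) p = c * shapley P v p := by
  unfold shapley
  split
  · rw [eq_comm, ← mul_div_assoc, Finset.mul_sum]
    congr 1
    apply Finset.sum_congr rfl
    intros; ring
  · ring

lemma shapley_sum {α ι : Type*} [DecidableEq α] (P : Finset α) (s : Finset ι)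
    (v : ι → Finset α → ℝ) (p : α) :
    shapley P (fun Q => ∑ t ∈ s, v t Q) p = ∑ t ∈ s, shapley P (v t) p := by
  classical
  induction s using Finset.induction with
  | empty =>
    simp only [Finset.sum_empty]
    unfold shapley
    split <;> simp
  | insert _ _ hni ih =>
    rw [Finset.sum_insert hni, ← ih, ← shapley_add]
    simp_rw [Finset.sum_insert hni]

lemma shapley_uT {α : Type*} [DecidableEq α] (P T : Finset α) (hT : T ⊆ P) (hTne : T.Nonempty)
    (p : α) (hp : p ∈ P) :
    shapley P (uT T) p = if p ∈ T then ((T.card : ℝ))⁻¹ else 0 := by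
  classical
  rw [shapley, dif_pos hp]
  by_cases hpT : p ∈ T
  · rw [if_pos hpT]
    -- step 1: each term is the indicator that p is π-minimal in T
    have hterm : ∀ π : {x // x ∈ P} ≃ Fin P.card,
        uT T ((P.attach.filter fun q => π q ≤ π ⟨p, hp⟩).image Subtype.val) -
          uT T (((P.attach.filter fun q => π q ≤ π ⟨p, hp⟩).image Subtype.val).erase p) =
        if (∀ q : {x // x ∈ P}, q.1 ∈ T → π ⟨p, hp⟩ ≤ π q) then 1 else 0 := by
      intro π
      set S := (P.attach.filter fun q => π q ≤ π ⟨p, hp⟩).image Subtype.val with hSdef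
      have hpS : p ∈ S := by
        simp only [hSdef, Finset.mem_image]
        exact ⟨⟨p, hp⟩, Finset.mem_filter.mpr ⟨Finset.mem_attach _ _, le_refl _⟩, rfl⟩
      have h1 : uT T S = 1 := by
        rw [uT, if_pos ⟨p, Finset.mem_inter.mpr ⟨hpS, hpT⟩⟩]
      rw [h1]
      have h2 : ((S.erase p) ∩ T).Nonempty ↔
          ¬ (∀ q : {x // x ∈ P}, q.1 ∈ T → π ⟨p, hp⟩ ≤ π q) := by
        constructor
        · rintro ⟨q, hq⟩ hall
          simp only [Finset.mem_inter, Finset.mem_erase] at hq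
          obtain ⟨⟨hqp, hqS⟩, hqT⟩ := hq
          simp only [hSdef, Finset.mem_image, Finset.mem_filter] at hqS
          obtain ⟨q', ⟨_, hq'le⟩, rfl⟩ := hqS
          have := hall q' hqT
          have : π q' = π ⟨p, hp⟩ := le_antisymm hq'le this
          exact hqp (congrArg Subtype.val (π.injective this))
        · intro hnot
          push_neg at hnot
          obtain ⟨q, hqT, hqlt⟩ := hnot
          refine ⟨q.1, Finset.mem_inter.mpr ⟨Finset.mem_erase.mpr ⟨?_, ?_⟩, hqT⟩⟩
          · intro heq
            have hq' : q = ⟨p, hp⟩ := Subtype.ext heq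
            rw [hq'] at hqlt
            exact absurd le_rfl (not_le.mpr hqlt)
          · simp only [hSdef, Finset.mem_image]
            exact ⟨q, Finset.mem_filter.mpr ⟨Finset.mem_attach _ _, le_of_lt hqlt⟩, rfl⟩
      rw [uT]
      by_cases hA : ∀ q : {x // x ∈ P}, q.1 ∈ T → π ⟨p, hp⟩ ≤ π q
      · rw [if_pos hA, if_neg (fun hne => (h2.mp hne) hA)]
        norm_num
      · rw [if_neg hA, if_pos (h2.mpr hA)]
        norm_num
    rw [Finset.sum_congr rfl (fun π _ => hterm π)]
    -- step 2: counting
    set T' : Finset {x // x ∈ P} := Finset.univ.filter (fun q => q.1 ∈ T) with hT'def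
    have himg : T'.image Subtype.val = T := by
      ext t
      simp only [hT'def, Finset.mem_image, Finset.mem_filter, Finset.mem_univ, true_and]
      constructor
      · rintro ⟨a, haT, rfl⟩; exact haT
      · intro ht; exact ⟨⟨t, hT ht⟩, ht, rfl⟩
    have hT'card : T'.card = T.card := by
      rw [← himg]
      exact (Finset.card_image_of_injective _ Subtype.val_injective).symm
    set A : {x // x ∈ P} → Finset ({x // x ∈ P} ≃ Fin P.card) :=
      fun r => Finset.univ.filter (fun π => ∀ q ∈ T', π r ≤ π q) with hAdef
    have hcond : ∀ (π : {x // x ∈ P} ≃ Fin P.card) (r : {x // x ∈ P}),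
        ((∀ q : {x // x ∈ P}, q.1 ∈ T → π r ≤ π q) ↔ ∀ q ∈ T', π r ≤ π q) := by
      intro π r
      constructor
      · intro h q hq
        exact h q (by simpa [hT'def] using hq)
      · intro h q hq
        exact h q (by simp [hT'def, hq])
    -- equal cardinalities
    have hcardeq : ∀ r ∈ T', ∀ r' ∈ T', (A r).card = (A r').card := by
      intro r hr r' hr'
      apply Finset.card_nbij' (fun π => (Equiv.swap r r').trans π)
        (fun π => (Equiv.swap r r').trans π)
      · intro π hπ
        simp only [hAdef, Finset.mem_coe, Finset.mem_filter, Finset.mem_univ, true_and] at hπ ⊢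
        intro q hq
        have hswap : Equiv.swap r r' q ∈ T' := by
          by_cases h1 : q = r
          · simpa [h1, Equiv.swap_apply_left] using hr'
          · by_cases h2 : q = r'
            · simpa [h2, Equiv.swap_apply_right] using hr
            · rwa [Equiv.swap_apply_of_ne_of_ne h1 h2]
        have := hπ _ hswap
        simpa [Equiv.swap_apply_right] using this
      · intro π hπ
        simp only [hAdef, Finset.mem_coe, Finset.mem_filter, Finset.mem_univ, true_and] at hπ ⊢
        intro q hq
        have hswap : Equiv.swap r r' q ∈ T' := by
          by_cases h1 : q = r
          · simpa [h1, Equiv.swap_apply_left] using hr'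
          · by_cases h2 : q = r'
            · simpa [h2, Equiv.swap_apply_right] using hr
            · rwa [Equiv.swap_apply_of_ne_of_ne h1 h2]
        have := hπ _ hswap
        simpa [Equiv.swap_apply_left] using this
      · intro π _
        ext q
        simp only [Equiv.trans_apply, Equiv.swap_apply_self]
      · intro π _
        ext q
        simp only [Equiv.trans_apply, Equiv.swap_apply_self]
    -- partition: sums of cards over T' equals n!
    have hpartition : ∑ r ∈ T', (A r).card = (P.card).factorial := by
      have hAcard : ∀ r, (A r).card =
          ∑ π : {x // x ∈ P} ≃ Fin P.card, (if ∀ q ∈ T', π r ≤ π q then 1 else 0) := by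
        intro r
        rw [hAdef]
        exact Finset.card_filter _ _
      rw [Finset.sum_congr rfl (fun r _ => hAcard r), Finset.sum_comm]
      have hT'ne : T'.Nonempty := by
        obtain ⟨t, ht⟩ := hTne
        exact ⟨⟨t, hT ht⟩, by simp [hT'def, ht]⟩
      have hinner : ∀ π : {x // x ∈ P} ≃ Fin P.card,
          ∑ r ∈ T', (if ∀ q ∈ T', π r ≤ π q then 1 else 0) = 1 := by
        intro π
        obtain ⟨r0, hr0T, hr0min⟩ := Finset.exists_mem_eq_inf' hT'ne π
        have hr0cond : ∀ q ∈ T', π r0 ≤ π q := by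
          intro q hq
          rw [← hr0min]
          exact Finset.inf'_le _ hq
        have : ∀ r ∈ T', (if ∀ q ∈ T', π r ≤ π q then (1:ℕ) else 0) =
            if r = r0 then 1 else 0 := by
          intro r hr
          congr 1
          simp only [eq_iff_iff]
          constructor
          · intro hc
            have h1 := hc r0 hr0T
            have h2 := hr0cond r hr
            exact π.injective (le_antisymm h1 h2)
          · rintro rfl; exact hr0cond
        rw [Finset.sum_congr rfl this, Finset.sum_ite_eq' T' r0, if_pos hr0T]
      rw [Finset.sum_congr rfl (fun π _ => hinner π), Finset.sum_const, smul_eq_mul, mul_one]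
      rw [Finset.card_univ, Fintype.card_equiv (Fintype.equivFinOfCardEq (Fintype.card_coe P))]
      rw [Fintype.card_coe]
    have hpT' : (⟨p, hp⟩ : {x // x ∈ P}) ∈ T' := by simp [hT'def, hpT]
    have hconst : ∑ r ∈ T', (A r).card = T.card * (A ⟨p, hp⟩).card := by
      rw [Finset.sum_congr rfl (fun r hr => hcardeq r hr _ hpT'), Finset.sum_const, smul_eq_mul,
        hT'card]
    -- now put together
    have hsum : (∑ π : {x // x ∈ P} ≃ Fin P.card,
        (if (∀ q : {x // x ∈ P}, q.1 ∈ T → π ⟨p, hp⟩ ≤ π q) then (1:ℝ) else 0)) =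
        ((A ⟨p, hp⟩).card : ℝ) := by
      rw [hAdef]
      rw [Finset.card_filter]
      push_cast
      apply Finset.sum_congr rfl
      intro π _
      exact if_congr (hcond π _) rfl rfl
    rw [hsum]
    have hkey : (T.card : ℝ) * (A ⟨p, hp⟩).card = (P.card).factorial := by
      have h := congrArg (Nat.cast (R := ℝ)) (hconst.symm.trans hpartition)
      push_cast at h
      linarith [h]
    have hT0 : (T.card : ℝ) ≠ 0 := by
      simp only [ne_eq, Nat.cast_eq_zero, Finset.card_eq_zero]
      exact fun h => by simp [h] at hTne
    have hfact0 : ((P.card).factorial : ℝ) ≠ 0 := by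
      exact_mod_cast (Nat.factorial_pos _).ne'
    field_simp
    rw [mul_comm] at hkey
    linarith [hkey]
  · rw [if_neg hpT]
    have : ∀ π : {x // x ∈ P} ≃ Fin P.card,
        uT T ((P.attach.filter fun q => π q ≤ π ⟨p, hp⟩).image Subtype.val) -
          uT T (((P.attach.filter fun q => π q ≤ π ⟨p, hp⟩).image Subtype.val).erase p) = 0 := by
      intro π
      set S := (P.attach.filter fun q => π q ≤ π ⟨p, hp⟩).image Subtype.val
      have : S.erase p ∩ T = S ∩ T := by
        ext q
        simp only [Finset.mem_inter, Finset.mem_erase]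
        constructor
        · rintro ⟨⟨_, h1⟩, h2⟩; exact ⟨h1, h2⟩
        · rintro ⟨h1, h2⟩
          refine ⟨⟨?_, h1⟩, h2⟩
          rintro rfl; exact hpT h2
      rw [uT, uT, this, sub_self]
    rw [Finset.sum_congr rfl (fun π _ => this π), Finset.sum_const, smul_zero, zero_div]

section Decomp
variable {α : Type*} [DecidableEq α]

lemma telescope (X : ℕ → ℝ) (a b : ℕ) (ha : 1 ≤ a) (hab : a ≤ b) :
    ∑ j ∈ Finset.Icc a (b - 1), (X (j + 1) - X j) = X b - X a := by
  have h1 : Finset.Icc a (b - 1) =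
      (Finset.range (b - a)).map ⟨fun j => a + j, add_right_injective a⟩ := by
    ext j
    simp only [Finset.mem_Icc, Finset.mem_map, Finset.mem_range, Function.Embedding.coeFn_mk]
    constructor
    · rintro ⟨h1, h2⟩
      exact ⟨j - a, by omega, by omega⟩
    · rintro ⟨i, h1, rfl⟩
      omega
  rw [h1, Finset.sum_map]
  simp only [Function.Embedding.coeFn_mk]
  calc ∑ i ∈ Finset.range (b - a), (X (a + i + 1) - X (a + i))
      = ∑ i ∈ Finset.range (b - a), (X (a + (i + 1)) - X (a + i)) := by
        apply Finset.sum_congr rfl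
        intro i _
        rw [Nat.add_assoc]
    _ = X (a + (b - a)) - X (a + 0) := Finset.sum_range_sub (fun i => X (a + i)) (b - a)
    _ = X b - X a := by rw [Nat.add_zero, Nat.add_sub_cancel' hab]

lemma mono_lt_iff (X : ℕ → ℝ) (n : ℕ)
    (hX : ∀ a b : ℕ, 1 ≤ a → a < b → b ≤ n → X a < X b)
    {a b : ℕ} (ha : a ∈ Finset.Icc 1 n) (hb : b ∈ Finset.Icc 1 n) :
    X a < X b ↔ a < b := by
  simp only [Finset.mem_Icc] at ha hb
  constructor
  · intro h
    by_contra hab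
    push_neg at hab
    rcases Nat.lt_or_ge b a with h1 | h1
    · exact absurd (hX b a hb.1 h1 ha.2) (by linarith)
    · have : a = b := le_antisymm h1 hab
      subst this
      exact lt_irrefl _ h
  · intro h
    exact hX a b ha.1 h hb.2

lemma sup'_decomp (P : Finset α) (f : α → ℝ) (n : ℕ) (X : ℕ → ℝ)
    (hX : ∀ a b : ℕ, 1 ≤ a → a < b → b ≤ n → X a < X b)
    (him : P.image f = (Finset.Icc 1 n).image X)
    (Q : Finset α) (hQ : Q ⊆ P) (h : Q.Nonempty) :
    Q.sup' h f = X 1 + ∑ j ∈ Finset.Icc 1 (n - 1),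
      (X (j + 1) - X j) * uT (P.filter fun q => X j < f q) Q := by
  obtain ⟨q0, hq0Q, hq0⟩ := Finset.exists_mem_eq_sup' h f
  have hfq0 : f q0 ∈ (Finset.Icc 1 n).image X := by
    rw [← him]
    exact Finset.mem_image_of_mem f (hQ hq0Q)
  obtain ⟨m, hm, hXm⟩ := Finset.mem_image.mp hfq0
  have hm' := Finset.mem_Icc.mp hm
  have hbound : ∀ q ∈ Q, f q ≤ X m := by
    intro q hq
    rw [hXm, ← hq0]
    exact Finset.le_sup' f hq
  have huT : ∀ j ∈ Finset.Icc 1 (n - 1),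
      uT (P.filter fun q => X j < f q) Q = if j < m then 1 else 0 := by
    intro j hj
    have hj' := Finset.mem_Icc.mp hj
    rw [uT]
    by_cases hjm : j < m
    · rw [if_pos hjm, if_pos]
      refine ⟨q0, Finset.mem_inter.mpr ⟨hq0Q, Finset.mem_filter.mpr ⟨hQ hq0Q, ?_⟩⟩⟩
      rw [← hXm]
      exact hX j m hj'.1 hjm hm'.2
    · rw [if_neg hjm, if_neg]
      rintro ⟨q, hq⟩
      rw [Finset.mem_inter, Finset.mem_filter] at hq
      have h1 : X j < f q := hq.2.2
      have h2 : f q ≤ X m := hbound q hq.1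
      have h3 : X m ≤ X j := by
        rcases Nat.eq_or_lt_of_le (Nat.le_of_not_lt hjm) with heq | hlt
        · rw [heq]
        · exact le_of_lt (hX m j hm'.1 hlt (by omega))
      linarith
  rw [Finset.sum_congr rfl fun j hj => by rw [huT j hj]]
  have hfilter : (Finset.Icc 1 (n - 1)).filter (fun j => j < m) = Finset.Icc 1 (m - 1) := by
    ext j
    simp only [Finset.mem_filter, Finset.mem_Icc]
    omega
  calc Q.sup' h f = X m := by rw [hq0, ← hXm]
    _ = X 1 + (X m - X 1) := by ring
    _ = _ := by
      rw [← telescope X 1 m (le_refl 1) hm'.1, ← hfilter, Finset.sum_filter]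
      congr 1
      apply Finset.sum_congr rfl
      intro j _
      split <;> ring

lemma inf'_decomp (P : Finset α) (f : α → ℝ) (n : ℕ) (X : ℕ → ℝ)
    (hX : ∀ a b : ℕ, 1 ≤ a → a < b → b ≤ n → X a < X b)
    (him : P.image f = (Finset.Icc 1 n).image X)
    (Q : Finset α) (hQ : Q ⊆ P) (h : Q.Nonempty) :
    Q.inf' h f = X n - ∑ j ∈ Finset.Icc 1 (n - 1),
      (X (j + 1) - X j) * uT (P.filter fun q => f q < X (j + 1)) Q := by
  obtain ⟨q0, hq0Q, hq0⟩ := Finset.exists_mem_eq_inf' h f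
  have hfq0 : f q0 ∈ (Finset.Icc 1 n).image X := by
    rw [← him]
    exact Finset.mem_image_of_mem f (hQ hq0Q)
  obtain ⟨m, hm, hXm⟩ := Finset.mem_image.mp hfq0
  have hm' := Finset.mem_Icc.mp hm
  have hbound : ∀ q ∈ Q, X m ≤ f q := by
    intro q hq
    rw [hXm, ← hq0]
    exact Finset.inf'_le f hq
  have huT : ∀ j ∈ Finset.Icc 1 (n - 1),
      uT (P.filter fun q => f q < X (j + 1)) Q = if m ≤ j then 1 else 0 := by
    intro j hj
    have hj' := Finset.mem_Icc.mp hj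
    rw [uT]
    by_cases hjm : m ≤ j
    · rw [if_pos hjm, if_pos]
      refine ⟨q0, Finset.mem_inter.mpr ⟨hq0Q, Finset.mem_filter.mpr ⟨hQ hq0Q, ?_⟩⟩⟩
      rw [← hXm]
      exact hX m (j + 1) hm'.1 (by omega) (by omega)
    · rw [if_neg hjm, if_neg]
      rintro ⟨q, hq⟩
      rw [Finset.mem_inter, Finset.mem_filter] at hq
      have h1 : f q < X (j + 1) := hq.2.2
      have h2 : X m ≤ f q := hbound q hq.1
      have h3 : X (j + 1) ≤ X m := by
        rcases Nat.eq_or_lt_of_le (Nat.succ_le_of_lt (Nat.lt_of_not_le hjm)) with heq | hlt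
        · exact le_of_eq (congrArg X heq)
        · exact le_of_lt (hX (j + 1) m (by omega) hlt hm'.2)
      linarith
  rw [Finset.sum_congr rfl fun j hj => by rw [huT j hj]]
  have hfilter : (Finset.Icc 1 (n - 1)).filter (fun j => m ≤ j) = Finset.Icc m (n - 1) := by
    ext j
    simp only [Finset.mem_filter, Finset.mem_Icc]
    omega
  calc Q.inf' h f = X m := by rw [hq0, ← hXm]
    _ = X n - (X n - X m) := by ring
    _ = _ := by
      rw [← telescope X m n hm'.1 hm'.2, ← hfilter, Finset.sum_filter]
      congr 1
      apply Finset.sum_congr rfl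
      intro j _
      split <;> ring

end Decomp

lemma card_filter_pred {α : Type*} [DecidableEq α] (P : Finset α) (f : α → ℝ) (n : ℕ)
    (hn : P.card = n) (X : ℕ → ℝ)
    (hX : ∀ a b : ℕ, 1 ≤ a → a < b → b ≤ n → X a < X b)
    (him : P.image f = (Finset.Icc 1 n).image X)
    (p : ℝ → Prop) [DecidablePred p] (s : Finset ℕ) (hsub : s ⊆ Finset.Icc 1 n)
    (hs : ∀ m ∈ Finset.Icc 1 n, (p (X m) ↔ m ∈ s)) :
    (P.filter fun q => p (f q)).card = s.card := by
  have hXinj : Set.InjOn X (Finset.Icc 1 n) := by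
    intro a ha b hb hab
    simp only [Finset.coe_Icc, Set.mem_Icc] at ha hb
    by_contra hne
    rcases Nat.lt_or_ge a b with h1 | h1
    · exact absurd (hX a b ha.1 h1 hb.2) (by rw [hab]; exact lt_irrefl _)
    · rcases Nat.eq_or_lt_of_le h1 with h2 | h2
      · exact hne h2.symm
      · exact absurd (hX b a hb.1 h2 ha.2) (by rw [hab]; exact lt_irrefl _)
  have hXinj' : Set.InjOn X (Finset.Icc 1 n : Finset ℕ) := hXinj
  have himcard : (P.image f).card = n := by
    rw [him, Finset.card_image_of_injOn hXinj', Nat.card_Icc]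
    omega
  have hfinj : Set.InjOn f P := Finset.injOn_of_card_image_eq (by rw [himcard, hn])
  calc (P.filter fun q => p (f q)).card
      = ((P.filter fun q => p (f q)).image f).card := by
        rw [Finset.card_image_of_injOn (hfinj.mono (by
          intro x hx
          exact Finset.mem_coe.mpr (Finset.filter_subset _ _ (Finset.mem_coe.mp hx))))]
    _ = ((P.image f).filter p).card := by rw [Finset.filter_image]
    _ = (s.image X).card := by
        rw [him]
        congr 1
        ext t
        simp only [Finset.mem_filter, Finset.mem_image]
        constructor
        · rintro ⟨⟨m, hm, rfl⟩, hpt⟩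
          exact ⟨m, (hs m hm).mp hpt, rfl⟩
        · rintro ⟨m, hms, rfl⟩
          exact ⟨⟨m, hsub hms, rfl⟩, (hs m (hsub hms)).mpr hms⟩
    _ = s.card := Finset.card_image_of_injOn (hXinj'.mono (by exact_mod_cast hsub))

lemma coord_sum (X : ℕ → ℝ) (n i : ℕ) (hi1 : 1 ≤ i) (hi2 : i ≤ n) :
    ∑ j ∈ Finset.Icc 1 (n - 1), ((X (j + 1) - X j) *
      ((if j < i then (((n - j : ℕ) : ℝ))⁻¹ else 0) + (if i ≤ j then ((j : ℕ) : ℝ)⁻¹ else 0))) =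
    (∑ j ∈ Finset.Icc 2 i, (X j - X (j - 1)) / ((n : ℝ) - (j : ℝ) + 1)) +
      (∑ j ∈ Finset.Icc i (n - 1), (X (j + 1) - X j) / (j : ℝ)) := by
  simp only [mul_add]
  rw [Finset.sum_add_distrib]
  congr 1
  · -- first sum
    have step1 : ∀ j ∈ Finset.Icc 1 (n - 1),
        (X (j + 1) - X j) * (if j < i then (((n - j : ℕ) : ℝ))⁻¹ else 0) =
        if j < i then (X (j + 1) - X j) / ((n : ℝ) - (j : ℝ)) else 0 := by
      intro j hj
      have hj' := Finset.mem_Icc.mp hj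
      split
      · rename_i hlt
        rw [div_eq_mul_inv]
        congr 2
        push_cast [Nat.cast_sub (by omega : j ≤ n)]
        ring
      · ring
    rw [Finset.sum_congr rfl step1, Finset.sum_ite, Finset.sum_const, smul_zero, add_zero]
    have hfilter : (Finset.Icc 1 (n - 1)).filter (fun j => j < i) = Finset.Icc 1 (i - 1) := by
      ext j
      simp only [Finset.mem_filter, Finset.mem_Icc]
      omega
    rw [hfilter]
    have hmap : Finset.Icc 2 i =
        (Finset.Icc 1 (i - 1)).map ⟨fun j => j + 1, add_left_injective 1⟩ := by
      ext j
      simp only [Finset.mem_Icc, Finset.mem_map, Function.Embedding.coeFn_mk]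
      constructor
      · rintro ⟨h1, h2⟩
        exact ⟨j - 1, by omega, by omega⟩
      · rintro ⟨m, hm, rfl⟩
        omega
    rw [hmap, Finset.sum_map]
    simp only [Function.Embedding.coeFn_mk]
    apply Finset.sum_congr rfl
    intro j hj
    have hj' := Finset.mem_Icc.mp hj
    have h1 : j + 1 - 1 = j := by omega
    rw [h1]
    congr 1
    push_cast
    ring
  · -- second sum
    have step2 : ∀ j ∈ Finset.Icc 1 (n - 1),
        (X (j + 1) - X j) * (if i ≤ j then ((j : ℕ) : ℝ)⁻¹ else 0) =
        if i ≤ j then (X (j + 1) - X j) / (j : ℝ) else 0 := by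
      intro j _
      split
      · rw [div_eq_mul_inv]
      · ring
    rw [Finset.sum_congr rfl step2, Finset.sum_ite, Finset.sum_const, smul_zero, add_zero]
    congr 1
    ext j
    simp only [Finset.mem_filter, Finset.mem_Icc]
    omega

/-- Shapley values for the perimeter of the bounding box: let `P` be `n` points
in the plane with pairwise distinct coordinates, `X 1 < ⋯ < X n` the sorted
`x`-coordinates and `Y 1 < ⋯ < Y n` the sorted `y`-coordinates.  For `p ∈ P`
with `p.1 = X i` and `p.2 = Y k`,
`φ(p, v_pbb) = 2·[∑_{j=2}^{i}(X j − X (j−1))/(n−j+1) + ∑_{j=i}^{n−1}(X (j+1) − X j)/j − (X n − X 1)/n]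
             + 2·[∑_{j=2}^{k}(Y j − Y (j−1))/(n−j+1) + ∑_{j=k}^{n−1}(Y (j+1) − Y j)/j − (Y n − Y 1)/n]`. -/
theorem shapley_perimeter_bounding_box (P : Finset (ℝ × ℝ)) (n : ℕ)
    (hn : P.card = n) (X Y : ℕ → ℝ)
    (hXmono : ∀ a b : ℕ, 1 ≤ a → a < b → b ≤ n → X a < X b)
    (hYmono : ∀ a b : ℕ, 1 ≤ a → a < b → b ≤ n → Y a < Y b)
    (hXim : P.image Prod.fst = (Finset.Icc 1 n).image X)
    (hYim : P.image Prod.snd = (Finset.Icc 1 n).image Y)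
    (p : ℝ × ℝ) (hp : p ∈ P)
    (i k : ℕ) (hi : i ∈ Finset.Icc 1 n) (hk : k ∈ Finset.Icc 1 n)
    (hpi : p.1 = X i) (hpk : p.2 = Y k) :
    shapley P
      (fun Q => if h : Q.Nonempty then
          2 * ((Q.sup' h fun q => q.1) - (Q.inf' h fun q => q.1)) +
            2 * ((Q.sup' h fun q => q.2) - (Q.inf' h fun q => q.2))
        else 0) p =
      2 * ((∑ j ∈ Finset.Icc 2 i, (X j - X (j - 1)) / ((n : ℝ) - (j : ℝ) + 1)) +
          (∑ j ∈ Finset.Icc i (n - 1), (X (j + 1) - X j) / (j : ℝ)) -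
          (X n - X 1) / (n : ℝ)) +
        2 * ((∑ j ∈ Finset.Icc 2 k, (Y j - Y (j - 1)) / ((n : ℝ) - (j : ℝ) + 1)) +
          (∑ j ∈ Finset.Icc k (n - 1), (Y (j + 1) - Y j) / (j : ℝ)) -
          (Y n - Y 1) / (n : ℝ)) := by
  classical
  have hi' := Finset.mem_Icc.mp hi
  have hk' := Finset.mem_Icc.mp hk
  have hn1 : 1 ≤ n := le_trans hi'.1 hi'.2
  -- the decomposed game
  set w : Finset (ℝ × ℝ) → ℝ := fun Q =>
    (2 * (X 1 - X n) + 2 * (Y 1 - Y n)) * uT P Q +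
    ∑ j ∈ Finset.Icc 1 (n - 1),
      (2 * (X (j + 1) - X j) *
        (uT (P.filter fun q => X j < q.1) Q + uT (P.filter fun q => q.1 < X (j + 1)) Q) +
      2 * (Y (j + 1) - Y j) *
        (uT (P.filter fun q => Y j < q.2) Q + uT (P.filter fun q => q.2 < Y (j + 1)) Q))
    with hwdef
  -- step 1 : congruence
  have hcongr : shapley P
      (fun Q => if h : Q.Nonempty then
          2 * ((Q.sup' h fun q => q.1) - (Q.inf' h fun q => q.1)) +
            2 * ((Q.sup' h fun q => q.2) - (Q.inf' h fun q => q.2))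
        else 0) p = shapley P w p := by
    apply shapley_congr
    intro Q hQ
    by_cases hQne : Q.Nonempty
    · simp only [hwdef]
      rw [dif_pos hQne, sup'_decomp P Prod.fst n X hXmono hXim Q hQ hQne,
        inf'_decomp P Prod.fst n X hXmono hXim Q hQ hQne,
        sup'_decomp P Prod.snd n Y hYmono hYim Q hQ hQne,
        inf'_decomp P Prod.snd n Y hYmono hYim Q hQ hQne,
        uT_of_subset hQ hQne]
      simp only [mul_add, mul_assoc, Finset.sum_add_distrib, ← Finset.mul_sum]
      ring
    · rw [Finset.not_nonempty_iff_eq_empty] at hQne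
      subst hQne
      simp only [hwdef]
      rw [dif_neg (by simp)]
      simp [uT_empty]
  rw [hcongr, hwdef]
  -- cards and memberships
  have hgtX : ∀ j, 1 ≤ j → j ≤ n - 1 → ∀ m ∈ Finset.Icc 1 n,
      ((X j < X m) ↔ m ∈ Finset.Icc (j + 1) n) := by
    intro j h1 h2 m hm
    rw [mono_lt_iff X n hXmono (Finset.mem_Icc.mpr ⟨h1, by omega⟩) hm, Finset.mem_Icc]
    have := Finset.mem_Icc.mp hm
    omega
  have hltX : ∀ j, 1 ≤ j → j ≤ n - 1 → ∀ m ∈ Finset.Icc 1 n,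
      ((X m < X (j + 1)) ↔ m ∈ Finset.Icc 1 j) := by
    intro j h1 h2 m hm
    rw [mono_lt_iff X n hXmono hm (Finset.mem_Icc.mpr ⟨by omega, by omega⟩), Finset.mem_Icc]
    have := Finset.mem_Icc.mp hm
    omega
  have hgtY : ∀ j, 1 ≤ j → j ≤ n - 1 → ∀ m ∈ Finset.Icc 1 n,
      ((Y j < Y m) ↔ m ∈ Finset.Icc (j + 1) n) := by
    intro j h1 h2 m hm
    rw [mono_lt_iff Y n hYmono (Finset.mem_Icc.mpr ⟨h1, by omega⟩) hm, Finset.mem_Icc]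
    have := Finset.mem_Icc.mp hm
    omega
  have hltY : ∀ j, 1 ≤ j → j ≤ n - 1 → ∀ m ∈ Finset.Icc 1 n,
      ((Y m < Y (j + 1)) ↔ m ∈ Finset.Icc 1 j) := by
    intro j h1 h2 m hm
    rw [mono_lt_iff Y n hYmono hm (Finset.mem_Icc.mpr ⟨by omega, by omega⟩), Finset.mem_Icc]
    have := Finset.mem_Icc.mp hm
    omega
  have hTXcard : ∀ j, 1 ≤ j → j ≤ n - 1 → (P.filter fun q => X j < q.1).card = n - j := by
    intro j h1 h2
    have h := card_filter_pred P Prod.fst n hn X hXmono hXim (fun t => X j < t)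
      (Finset.Icc (j + 1) n) (Finset.Icc_subset_Icc (by omega) le_rfl) (hgtX j h1 h2)
    rw [Nat.card_Icc] at h
    rw [h]
    omega
  have hBXcard : ∀ j, 1 ≤ j → j ≤ n - 1 → (P.filter fun q => q.1 < X (j + 1)).card = j := by
    intro j h1 h2
    have h := card_filter_pred P Prod.fst n hn X hXmono hXim (fun t => t < X (j + 1))
      (Finset.Icc 1 j) (Finset.Icc_subset_Icc le_rfl (by omega)) (hltX j h1 h2)
    rw [Nat.card_Icc] at h
    rw [h]
    omega
  have hTYcard : ∀ j, 1 ≤ j → j ≤ n - 1 → (P.filter fun q => Y j < q.2).card = n - j := by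
    intro j h1 h2
    have h := card_filter_pred P Prod.snd n hn Y hYmono hYim (fun t => Y j < t)
      (Finset.Icc (j + 1) n) (Finset.Icc_subset_Icc (by omega) le_rfl) (hgtY j h1 h2)
    rw [Nat.card_Icc] at h
    rw [h]
    omega
  have hBYcard : ∀ j, 1 ≤ j → j ≤ n - 1 → (P.filter fun q => q.2 < Y (j + 1)).card = j := by
    intro j h1 h2
    have h := card_filter_pred P Prod.snd n hn Y hYmono hYim (fun t => t < Y (j + 1))
      (Finset.Icc 1 j) (Finset.Icc_subset_Icc le_rfl (by omega)) (hltY j h1 h2)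
    rw [Nat.card_Icc] at h
    rw [h]
    omega
  have hpTX : ∀ j, 1 ≤ j → j ≤ n - 1 → ((p ∈ P.filter fun q => X j < q.1) ↔ j < i) := by
    intro j h1 h2
    rw [Finset.mem_filter, hpi]
    simp only [hp, true_and]
    exact mono_lt_iff X n hXmono (Finset.mem_Icc.mpr ⟨h1, by omega⟩) hi
  have hpBX : ∀ j, 1 ≤ j → j ≤ n - 1 → ((p ∈ P.filter fun q => q.1 < X (j + 1)) ↔ i ≤ j) := by
    intro j h1 h2
    rw [Finset.mem_filter, hpi]
    simp only [hp, true_and]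
    rw [mono_lt_iff X n hXmono hi (Finset.mem_Icc.mpr ⟨by omega, by omega⟩)]
    omega
  have hpTY : ∀ j, 1 ≤ j → j ≤ n - 1 → ((p ∈ P.filter fun q => Y j < q.2) ↔ j < k) := by
    intro j h1 h2
    rw [Finset.mem_filter, hpk]
    simp only [hp, true_and]
    exact mono_lt_iff Y n hYmono (Finset.mem_Icc.mpr ⟨h1, by omega⟩) hk
  have hpBY : ∀ j, 1 ≤ j → j ≤ n - 1 → ((p ∈ P.filter fun q => q.2 < Y (j + 1)) ↔ k ≤ j) := by
    intro j h1 h2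
    rw [Finset.mem_filter, hpk]
    simp only [hp, true_and]
    rw [mono_lt_iff Y n hYmono hk (Finset.mem_Icc.mpr ⟨by omega, by omega⟩)]
    omega
  -- step 2 : compute shapley of w
  rw [shapley_add, shapley_smul, shapley_sum]
  rw [shapley_uT P P (le_refl P) ⟨p, hp⟩ p hp, if_pos hp, hn]
  have hshapj : ∀ j ∈ Finset.Icc 1 (n - 1),
      shapley P (fun Q =>
        2 * (X (j + 1) - X j) *
          (uT (P.filter fun q => X j < q.1) Q + uT (P.filter fun q => q.1 < X (j + 1)) Q) +
        2 * (Y (j + 1) - Y j) *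
          (uT (P.filter fun q => Y j < q.2) Q + uT (P.filter fun q => q.2 < Y (j + 1)) Q)) p =
      2 * (X (j + 1) - X j) *
        ((if j < i then (((n - j : ℕ) : ℝ))⁻¹ else 0) + (if i ≤ j then ((j : ℕ) : ℝ)⁻¹ else 0)) +
      2 * (Y (j + 1) - Y j) *
        ((if j < k then (((n - j : ℕ) : ℝ))⁻¹ else 0) + (if k ≤ j then ((j : ℕ) : ℝ)⁻¹ else 0)) := by
    intro j hj
    have hj' := Finset.mem_Icc.mp hj
    have hTXne : (P.filter fun q => X j < q.1).Nonempty := by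
      rw [← Finset.card_pos, hTXcard j hj'.1 hj'.2]; omega
    have hBXne : (P.filter fun q => q.1 < X (j + 1)).Nonempty := by
      rw [← Finset.card_pos, hBXcard j hj'.1 hj'.2]; omega
    have hTYne : (P.filter fun q => Y j < q.2).Nonempty := by
      rw [← Finset.card_pos, hTYcard j hj'.1 hj'.2]; omega
    have hBYne : (P.filter fun q => q.2 < Y (j + 1)).Nonempty := by
      rw [← Finset.card_pos, hBYcard j hj'.1 hj'.2]; omega
    rw [shapley_add, shapley_smul, shapley_smul, shapley_add, shapley_add,
      shapley_uT P _ (Finset.filter_subset _ _) hTXne p hp,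
      shapley_uT P _ (Finset.filter_subset _ _) hBXne p hp,
      shapley_uT P _ (Finset.filter_subset _ _) hTYne p hp,
      shapley_uT P _ (Finset.filter_subset _ _) hBYne p hp,
      hTXcard j hj'.1 hj'.2, hBXcard j hj'.1 hj'.2, hTYcard j hj'.1 hj'.2,
      hBYcard j hj'.1 hj'.2,
      if_congr (hpTX j hj'.1 hj'.2) rfl rfl, if_congr (hpBX j hj'.1 hj'.2) rfl rfl,
      if_congr (hpTY j hj'.1 hj'.2) rfl rfl, if_congr (hpBY j hj'.1 hj'.2) rfl rfl]
  rw [Finset.sum_congr rfl hshapj]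
  -- step 3 : arithmetic
  have hsplit : ∑ j ∈ Finset.Icc 1 (n - 1),
      (2 * (X (j + 1) - X j) *
        ((if j < i then (((n - j : ℕ) : ℝ))⁻¹ else 0) + (if i ≤ j then ((j : ℕ) : ℝ)⁻¹ else 0)) +
      2 * (Y (j + 1) - Y j) *
        ((if j < k then (((n - j : ℕ) : ℝ))⁻¹ else 0) + (if k ≤ j then ((j : ℕ) : ℝ)⁻¹ else 0))) =
      2 * (∑ j ∈ Finset.Icc 1 (n - 1), ((X (j + 1) - X j) *
        ((if j < i then (((n - j : ℕ) : ℝ))⁻¹ else 0) + (if i ≤ j then ((j : ℕ) : ℝ)⁻¹ else 0)))) +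
      2 * (∑ j ∈ Finset.Icc 1 (n - 1), ((Y (j + 1) - Y j) *
        ((if j < k then (((n - j : ℕ) : ℝ))⁻¹ else 0) + (if k ≤ j then ((j : ℕ) : ℝ)⁻¹ else 0)))) := by
    rw [Finset.sum_add_distrib, Finset.mul_sum, Finset.mul_sum]
    congr 1 <;> apply Finset.sum_congr rfl <;> intro j _ <;> ring
  rw [hsplit, coord_sum X n i hi'.1 hi'.2, coord_sum Y n k hk'.1 hk'.2]
  ring
end
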